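/- arXiv:2011.09893 — 4 statements merged into one kernel-verified Lean document; each statement's English description precedes it below -/
import Mathlib

section
/- Let x ∈ B_ρ(x_0) satisfy F_i(x) = y^i for all i, let ‖y^{δ,i} − y^i‖ < δ^i, assume τ > 2(1+η)/(1−2η), and let n_*^δ be the termination index. If the iterates x_0,…,x_{n_*^δ} lie in B_ρ(x_0), then ‖x_{n+1} − x‖ ≤ ‖x_n − x‖ for all n = 0,…,n_*^δ. -/
open Metric Filter
open Fin.NatCast

set_option maxHeartbeats 1600000 in
/-- **Monotonicity of the loping Landweber–Kaczmarz iteration up to the termination index.** -/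
theorem loping_landweber_kaczmarz_monotone
    {X Y : Type*} [NormedAddCommGroup X] [InnerProductSpace ℝ X] [CompleteSpace X]
    [NormedAddCommGroup Y] [InnerProductSpace ℝ Y] [CompleteSpace Y]
    {N : ℕ} [NeZero N]
    (F : Fin N → X → Y) (F' : Fin N → X → X →L[ℝ] Y)
    (x₀ : X) (ρ : ℝ) (hρ : 0 < ρ)
    (hdiff : ∀ i, ∀ z ∈ closedBall x₀ ρ, HasFDerivAt (F i) (F' i z) z)
    (hscal : ∀ i, ∀ z ∈ closedBall x₀ ρ, ‖F' i z‖ ≤ 1)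
    (η : ℝ) (hη : η < 1 / 2)
    (htcc : ∀ i, ∀ z ∈ closedBall x₀ ρ, ∀ z' ∈ closedBall x₀ ρ,
      ‖F i z - F i z' - F' i z (z - z')‖ ≤ η * ‖F i z - F i z'‖)
    (y yδ : Fin N → Y) (δ : Fin N → ℝ) (hδ : ∀ i, 0 ≤ δ i)
    (τ : ℝ) (hτ : 2 * (1 + η) / (1 - 2 * η) < τ)
    (hnoise : ∀ i, ‖yδ i - y i‖ < δ i)
    (x : X) (hx : x ∈ closedBall x₀ ρ) (hsol : ∀ i, F i x = y i)
    (xs : ℕ → X) (hxs0 : xs 0 = x₀)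
    (ω : ℕ → ℝ)
    (hω : ∀ n, ω n =
      if τ * δ (n : Fin N) < ‖F (n : Fin N) (xs n) - yδ (n : Fin N)‖ then 1 else 0)
    (hxs : ∀ n, xs (n + 1) = xs n -
      ω n • (ContinuousLinearMap.adjoint (F' (n : Fin N) (xs n)))
        (F (n : Fin N) (xs n) - yδ (n : Fin N)))
    (nstar : ℕ) (hmulN : N ∣ nstar)
    (hstat : ∀ j ≤ N, xs (nstar + j) = xs nstar)
    (hmin : ∀ m, N ∣ m → (∀ j ≤ N, xs (m + j) = xs m) → nstar ≤ m)
    (hball : ∀ n ≤ nstar, xs n ∈ closedBall x₀ ρ) :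
    ∀ n ≤ nstar, ‖xs (n + 1) - x‖ ≤ ‖xs n - x‖ := by
  intro n hn
  have hxn : xs n ∈ closedBall x₀ ρ := hball n hn
  set i : Fin N := (n : Fin N) with hi
  set A : X →L[ℝ] Y := F' i (xs n) with hA
  set s : Y := F i (xs n) - yδ i with hs
  rw [hxs n, hω n]
  split_ifs with h
  · -- ω = 1
    rw [one_smul]
    by_cases hη0 : 0 ≤ η
    · -- main estimate
      set v : X := (ContinuousLinearMap.adjoint A) s with hv
      set u : X := xs n - x with hu
      have hgoal : xs n - v - x = u - v := by rw [hu]; abel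
      rw [hgoal]
      -- basic facts
      set e : Y := yδ i - y i with he
      have hse : F i (xs n) - F i x = s + e := by
        rw [hs, he, hsol i]; abel
      set r : Y := F i (xs n) - F i x - A u with hr
      have hrb : ‖r‖ ≤ η * ‖s + e‖ := by
        have h0 := htcc i (xs n) hxn x hx
        rw [hse] at h0
        rw [hr, hu, hse, hA]
        exact h0
      have hAu : A u = s + e - r := by rw [hr, hse]; abel
      have hinner : (inner ℝ u v : ℝ) = inner ℝ (A u) s := by
        rw [real_inner_comm, hv, ContinuousLinearMap.adjoint_inner_left, real_inner_comm]
      have hvnorm : ‖v‖ ≤ ‖s‖ := by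
        calc ‖v‖ ≤ ‖ContinuousLinearMap.adjoint A‖ * ‖s‖ :=
              (ContinuousLinearMap.adjoint A).le_opNorm s
          _ ≤ 1 * ‖s‖ := by
              have : ‖ContinuousLinearMap.adjoint A‖ = ‖A‖ :=
                ContinuousLinearMap.adjoint.norm_map A
              rw [this]
              exact mul_le_mul_of_nonneg_right (hscal i (xs n) hxn) (norm_nonneg s)
          _ = ‖s‖ := one_mul _
      -- scalar inequalities
      have hτpos : 0 < τ := by
        have h1 : 0 < 1 - 2 * η := by linarith
        have h2 : 0 ≤ 2 * (1 + η) / (1 - 2 * η) := by positivity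
        linarith
      have hepos : ‖e‖ < δ i := hnoise i
      have hδi : 0 ≤ δ i := hδ i
      have h' : τ * δ i < ‖s‖ := h
      have hspos : 0 < ‖s‖ := lt_of_le_of_lt (by positivity) h'
      have hτη : 2 * (1 + η) < (1 - 2 * η) * τ := by
        have h1 : 0 < 1 - 2 * η := by linarith
        rw [div_lt_iff₀ h1] at hτ
        linarith [hτ]
      have hes : -(‖e‖ * ‖s‖) ≤ (inner ℝ e s : ℝ) := by
        have h1 : |(inner ℝ e s : ℝ)| ≤ ‖e‖ * ‖s‖ := abs_real_inner_le_norm e s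
        have := neg_abs_le (inner ℝ e s : ℝ)
        linarith
      have hrs : (inner ℝ r s : ℝ) ≤ ‖r‖ * ‖s‖ := real_inner_le_norm r s
      have hrb2 : ‖r‖ ≤ η * (‖s‖ + ‖e‖) := by
        have h1 : ‖s + e‖ ≤ ‖s‖ + ‖e‖ := norm_add_le s e
        calc ‖r‖ ≤ η * ‖s + e‖ := hrb
          _ ≤ η * (‖s‖ + ‖e‖) := mul_le_mul_of_nonneg_left h1 hη0
      have hAus : (inner ℝ (A u) s : ℝ) = ‖s‖ ^ 2 + inner ℝ e s - inner ℝ r s := by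
        rw [hAu]
        rw [inner_sub_left, inner_add_left, real_inner_self_eq_norm_sq]
      have key : ‖v‖ ^ 2 ≤ 2 * inner ℝ u v := by
        have hv2 : ‖v‖ ^ 2 ≤ ‖s‖ ^ 2 := pow_le_pow_left₀ (norm_nonneg v) hvnorm 2
        rw [hinner, hAus]
        have h12 : 0 < 1 - 2 * η := by linarith
        have c1 : 2 * (1 + η) * ‖e‖ ≤ (1 - 2 * η) * ‖s‖ := by
          have e1 : 2 * (1 + η) * ‖e‖ ≤ 2 * (1 + η) * δ i :=
            mul_le_mul_of_nonneg_left (le_of_lt hepos) (by linarith)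
          have e2 : 2 * (1 + η) * δ i ≤ (1 - 2 * η) * τ * δ i :=
            mul_le_mul_of_nonneg_right (le_of_lt hτη) hδi
          have e3 : (1 - 2 * η) * (τ * δ i) ≤ (1 - 2 * η) * ‖s‖ :=
            mul_le_mul_of_nonneg_left (le_of_lt h') (le_of_lt h12)
          calc 2 * (1 + η) * ‖e‖ ≤ 2 * (1 + η) * δ i := e1
            _ ≤ (1 - 2 * η) * τ * δ i := e2
            _ = (1 - 2 * η) * (τ * δ i) := by ring
            _ ≤ (1 - 2 * η) * ‖s‖ := e3
        have c2 : 2 * (1 + η) * ‖e‖ * ‖s‖ ≤ (1 - 2 * η) * ‖s‖ * ‖s‖ :=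
          mul_le_mul_of_nonneg_right c1 (norm_nonneg s)
        have crs : ‖r‖ * ‖s‖ ≤ η * (‖s‖ + ‖e‖) * ‖s‖ :=
          mul_le_mul_of_nonneg_right hrb2 (norm_nonneg s)
        have hmain : ‖s‖ ^ 2 ≤ 2 * (‖s‖ ^ 2 + inner ℝ e s - inner ℝ r s) := by
          nlinarith [hes, hrs, c2, crs]
        linarith
      have hsq : ‖u - v‖ ^ 2 ≤ ‖u‖ ^ 2 := by
        have hn2 : ‖u - v‖ ^ 2 = ‖u‖ ^ 2 - 2 * inner ℝ u v + ‖v‖ ^ 2 :=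
          norm_sub_sq_real u v
        linarith
      nlinarith [norm_nonneg (u - v), norm_nonneg u]
    · -- η < 0 : the derivative vanishes on the ball
      push_neg at hη0
      have key : ∀ w : X, ‖w‖ ≤ ρ → A (xs n - (x₀ + w)) = 0 := by
        intro w hw
        have hmem : x₀ + w ∈ closedBall x₀ ρ := by
          simpa [mem_closedBall, dist_eq_norm] using hw
        have h1 := htcc i (xs n) hxn (x₀ + w) hmem
        have hF : F i (xs n) - F i (x₀ + w) = 0 := by
          by_contra hne
          have h2 : 0 < ‖F i (xs n) - F i (x₀ + w)‖ := norm_pos_iff.mpr hne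
          nlinarith [norm_nonneg (F i (xs n) - F i (x₀ + w) - A (xs n - (x₀ + w)))]
        rw [hF, zero_sub, norm_neg, norm_zero, mul_zero] at h1
        exact norm_le_zero_iff.mp h1
      have hA0 : ∀ w : X, ‖w‖ ≤ ρ → A w = 0 := by
        intro w hw
        have h1 := key w hw
        have h2 := key 0 (by simpa using le_of_lt hρ)
        have h3 : A (xs n - (x₀ + w)) = A (xs n - (x₀ + 0)) - A w := by
          rw [← map_sub]; congr 1; abel
        rw [h1, h2, zero_sub, eq_comm, neg_eq_zero] at h3
        exact h3
      have hAall : A = 0 := by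
        ext w
        rcases eq_or_ne w 0 with rfl | hw
        · simp
        · have hw0 : (0 : ℝ) < ‖w‖ := norm_pos_iff.mpr hw
          have hc : (0 : ℝ) < ρ / ‖w‖ := div_pos hρ hw0
          have h1 : ‖(ρ / ‖w‖) • w‖ ≤ ρ := by
            rw [norm_smul, Real.norm_of_nonneg (le_of_lt hc), div_mul_cancel₀ _ (ne_of_gt hw0)]
          have h2 := hA0 _ h1
          rw [map_smul] at h2
          have h3 := smul_eq_zero.mp h2
          rcases h3 with h3 | h3
          · exact absurd h3 (ne_of_gt hc)
          · simpa using h3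
      show ‖xs n - (ContinuousLinearMap.adjoint A) s - x‖ ≤ ‖xs n - x‖
      rw [hAall]
      simp only [map_zero, ContinuousLinearMap.zero_apply, sub_zero, le_refl]
  · rw [zero_smul, sub_zero]
end

section
/- Assume the system F_i(x) = y^i (i = 0,…,N−1) has a solution in B_{ρ/2}(x_0), and consider the lLK iteration with exact data, i.e. y^{δ,i} = y^i and δ^i = 0 (so that ω_n = 1 whenever the residual is nonzero). Then the sequence (x_n) converges in X to a solution x* of the system F_i(x*) = y^i for all i = 0,…,N−1. -/
open Metric Filter
open Fin.NatCast

open scoped RealInnerProductSpace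

set_option maxHeartbeats 3200000 in
/-- **Convergence of the loping Landweber–Kaczmarz method for exact data.**
With exact data (`yδ = y`, `δ = 0`, so `ω n = 1` whenever the residual is nonzero),
the iterates converge to a solution of the system. -/
theorem loping_landweber_kaczmarz_exact_data_convergence
    {X Y : Type*} [NormedAddCommGroup X] [InnerProductSpace ℝ X] [CompleteSpace X]
    [NormedAddCommGroup Y] [InnerProductSpace ℝ Y] [CompleteSpace Y]
    {N : ℕ} [NeZero N]
    (F : Fin N → X → Y) (F' : Fin N → X → X →L[ℝ] Y)
    (x₀ : X) (ρ : ℝ) (hρ : 0 < ρ)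
    (hdiff : ∀ i, ∀ z ∈ closedBall x₀ ρ, HasFDerivAt (F i) (F' i z) z)
    (hscal : ∀ i, ∀ z ∈ closedBall x₀ ρ, ‖F' i z‖ ≤ 1)
    (η : ℝ) (hη : η < 1 / 2)
    (htcc : ∀ i, ∀ z ∈ closedBall x₀ ρ, ∀ z' ∈ closedBall x₀ ρ,
      ‖F i z - F i z' - F' i z (z - z')‖ ≤ η * ‖F i z - F i z'‖)
    (y : Fin N → Y)
    (hex : ∃ z ∈ closedBall x₀ (ρ / 2), ∀ i, F i z = y i)
    (xs : ℕ → X) (hxs0 : xs 0 = x₀)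
    (ω : ℕ → ℝ)
    (hω : ∀ n, ω n = if 0 < ‖F (n : Fin N) (xs n) - y (n : Fin N)‖ then 1 else 0)
    (hxs : ∀ n, xs (n + 1) = xs n -
      ω n • (ContinuousLinearMap.adjoint (F' (n : Fin N) (xs n)))
        (F (n : Fin N) (xs n) - y (n : Fin N)))
    : ∃ xstar : X, Tendsto xs atTop (nhds xstar) ∧ ∀ i, F i xstar = y i := by
  obtain ⟨z, hzB, hzsol⟩ := hex
  have hN : 0 < N := Nat.pos_of_ne_zero (NeZero.ne N)
  have hz2 : ‖z - x₀‖ ≤ ρ / 2 := by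
    simpa [dist_eq_norm] using hzB
  have hzρ : z ∈ closedBall x₀ ρ := by
    simp only [mem_closedBall, dist_eq_norm] at *
    linarith
  set η' : ℝ := max η 0 with hη'def
  have hη'0 : 0 ≤ η' := le_max_right _ _
  have hη'2 : η' < 1 / 2 := max_lt hη (by norm_num)
  have htcc' : ∀ i, ∀ a ∈ closedBall x₀ ρ, ∀ b ∈ closedBall x₀ ρ,
      ‖F i a - F i b - F' i a (a - b)‖ ≤ η' * ‖F i a - F i b‖ := fun i a ha b hb =>
    (htcc i a ha b hb).trans
      (mul_le_mul_of_nonneg_right (le_max_left _ _) (norm_nonneg _))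
  have hc : (0:ℝ) < 1 - 2 * η' := by linarith
  set r : ℕ → Y := fun n => F (n : Fin N) (xs n) - y (n : Fin N) with hrdef
  set g : ℕ → ℝ := fun n => ‖r n‖ ^ 2 with hgdef
  have hg0 : ∀ n, 0 ≤ g n := fun n => sq_nonneg _
  -- step without ω
  have hstep : ∀ n, xs (n + 1) = xs n -
      (ContinuousLinearMap.adjoint (F' (n : Fin N) (xs n))) (r n) := by
    intro n
    rw [hxs n, hω n]
    split_ifs with h
    · rw [one_smul]
    · have hr0 : F (n : Fin N) (xs n) - y (n : Fin N) = 0 := by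
        push_neg at h
        simpa using le_antisymm h (norm_nonneg _)
      simp [hrdef, hr0]
  have hadj : ∀ n : ℕ, xs n ∈ closedBall x₀ ρ →
      ‖(ContinuousLinearMap.adjoint (F' (n : Fin N) (xs n))) (r n)‖ ≤ ‖r n‖ := by
    intro n hn
    have h1 : ‖ContinuousLinearMap.adjoint (F' (n : Fin N) (xs n))‖ ≤ 1 := by
      rw [LinearIsometryEquiv.norm_map ContinuousLinearMap.adjoint (F' (n : Fin N) (xs n))]
      exact hscal _ _ hn
    calc ‖(ContinuousLinearMap.adjoint (F' (n : Fin N) (xs n))) (r n)‖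
        ≤ ‖ContinuousLinearMap.adjoint (F' (n : Fin N) (xs n))‖ * ‖r n‖ :=
          ContinuousLinearMap.le_opNorm _ _
      _ ≤ 1 * ‖r n‖ := mul_le_mul_of_nonneg_right h1 (norm_nonneg _)
      _ = ‖r n‖ := one_mul _
  -- key one-step decrease
  have hkey : ∀ n, xs n ∈ closedBall x₀ ρ →
      ‖xs (n + 1) - z‖ ^ 2 + (1 - 2 * η') * g n ≤ ‖xs n - z‖ ^ 2 := by
    intro n hn
    have h := htcc' (n : Fin N) (xs n) hn z hzρ
    have hrw : F (n : Fin N) (xs n) - F (n : Fin N) z = r n := by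
      simp only [hrdef, hzsol]
    rw [hrw] at h
    -- h : ‖r n - F' ↑n (xs n) (xs n - z)‖ ≤ η' * ‖r n‖
    have hIP : (1 - η') * ‖r n‖ ^ 2 ≤ ⟪F' (n : Fin N) (xs n) (xs n - z), r n⟫ := by
      have h2 : ⟪F' (n : Fin N) (xs n) (xs n - z), r n⟫ =
          ‖r n‖ ^ 2 - ⟪r n - F' (n : Fin N) (xs n) (xs n - z), r n⟫ := by
        rw [inner_sub_left, real_inner_self_eq_norm_sq]; ring
      have h3 : ⟪r n - F' (n : Fin N) (xs n) (xs n - z), r n⟫ ≤ η' * ‖r n‖ ^ 2 := by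
        calc ⟪r n - F' (n : Fin N) (xs n) (xs n - z), r n⟫
            ≤ ‖r n - F' (n : Fin N) (xs n) (xs n - z)‖ * ‖r n‖ := real_inner_le_norm _ _
          _ ≤ (η' * ‖r n‖) * ‖r n‖ := mul_le_mul_of_nonneg_right h (norm_nonneg _)
          _ = η' * ‖r n‖ ^ 2 := by ring
      rw [h2]; linarith
    have hadj2 : ‖(ContinuousLinearMap.adjoint (F' (n : Fin N) (xs n))) (r n)‖ ^ 2 ≤ ‖r n‖ ^ 2 :=
      pow_le_pow_left₀ (norm_nonneg _) (hadj n hn) 2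
    rw [hstep n]
    have hexp : xs n - (ContinuousLinearMap.adjoint (F' (n : Fin N) (xs n))) (r n) - z =
        (xs n - z) - (ContinuousLinearMap.adjoint (F' (n : Fin N) (xs n))) (r n) := by abel
    rw [hexp, norm_sub_sq_real]
    have hinner : ⟪xs n - z, (ContinuousLinearMap.adjoint (F' (n : Fin N) (xs n))) (r n)⟫ =
        ⟪F' (n : Fin N) (xs n) (xs n - z), r n⟫ :=
      ContinuousLinearMap.adjoint_inner_right _ _ _
    rw [hinner]
    have hgn : g n = ‖r n‖ ^ 2 := rfl
    rw [hgn]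
    nlinarith [hIP, hadj2]
  -- iterates stay in the ball
  have hball : ∀ n, ‖xs n - z‖ ≤ ρ / 2 := by
    intro n
    induction n with
    | zero => rw [hxs0, norm_sub_rev]; exact hz2
    | succ n ih =>
      have hmemn : xs n ∈ closedBall x₀ ρ := by
        simp only [mem_closedBall, dist_eq_norm]
        calc ‖xs n - x₀‖ ≤ ‖xs n - z‖ + ‖z - x₀‖ := norm_sub_le_norm_sub_add_norm_sub _ _ _
          _ ≤ ρ / 2 + ρ / 2 := add_le_add ih hz2
          _ = ρ := by ring
      have h := hkey n hmemn
      have h2 := mul_nonneg hc.le (hg0 n)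
      nlinarith [norm_nonneg (xs (n + 1) - z), norm_nonneg (xs n - z), hρ]
  have hmem : ∀ n, xs n ∈ closedBall x₀ ρ := by
    intro n
    simp only [mem_closedBall, dist_eq_norm]
    calc ‖xs n - x₀‖ ≤ ‖xs n - z‖ + ‖z - x₀‖ := norm_sub_le_norm_sub_add_norm_sub _ _ _
      _ ≤ ρ / 2 + ρ / 2 := add_le_add (hball n) hz2
      _ = ρ := by ring
  have hdec : ∀ n, ‖xs (n + 1) - z‖ ^ 2 + (1 - 2 * η') * g n ≤ ‖xs n - z‖ ^ 2 :=
    fun n => hkey n (hmem n)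
  -- summability of residuals
  have hsum : Summable g := by
    have htel : ∀ n, ∑ j ∈ Finset.range n, (1 - 2 * η') * g j ≤
        ‖xs 0 - z‖ ^ 2 - ‖xs n - z‖ ^ 2 := by
      intro n
      induction n with
      | zero => simp
      | succ n ih =>
        rw [Finset.sum_range_succ]
        have := hdec n
        linarith
    have hsum' : Summable (fun j => (1 - 2 * η') * g j) := by
      apply summable_of_sum_range_le (c := ‖xs 0 - z‖ ^ 2)
        (fun n => mul_nonneg hc.le (hg0 n))
      intro n
      have := htel n
      nlinarith [sq_nonneg ‖xs n - z‖]
    have h2 := hsum'.mul_left (1 - 2 * η')⁻¹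
    refine h2.congr (fun i => ?_)
    rw [← mul_assoc, inv_mul_cancel₀ hc.ne', one_mul]
  -- tails
  set t : ℕ → ℝ := fun k => ∑' j, g (j + k) with htdef
  have ht_nonneg : ∀ k, 0 ≤ t k := fun k => tsum_nonneg (fun j => hg0 _)
  have hshift : ∀ k, Summable (fun j => g (j + k)) := fun k =>
    hsum.comp_injective (add_left_injective k)
  have ht_anti : Antitone t := by
    intro k k' hkk'
    obtain ⟨d, rfl⟩ := Nat.exists_eq_add_of_le hkk'
    refine Summable.tsum_le_tsum_of_inj (fun j => j + d) (add_left_injective d)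
      (fun c _ => hg0 _) (fun j => ?_) (hshift _) (hshift _)
    show g (j + (k + d)) ≤ g ((j + d) + k)
    exact le_of_eq (congrArg g (by omega))
  have hIco : ∀ p q, ∑ j ∈ Finset.Ico p q, g j ≤ t p := by
    intro p q
    rw [Finset.sum_Ico_eq_sum_range]
    calc ∑ k ∈ Finset.range (q - p), g (p + k)
        = ∑ k ∈ Finset.range (q - p), g (k + p) :=
          Finset.sum_congr rfl (fun k _ => congrArg g (Nat.add_comm p k))
      _ ≤ t p := Summable.sum_le_tsum _ (fun i _ => hg0 _) (hshift p)
  have hgle : ∀ p j, p ≤ j → g j ≤ t p := by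
    intro p j hpj
    calc g j = g ((j - p) + p) := congrArg g (by omega)
      _ ≤ t p := Summable.le_tsum (hshift p) _ (fun _ _ => hg0 _)
  have ht0 : Tendsto t atTop (nhds 0) := tendsto_sum_nat_add g
  -- energy
  set E : ℕ → ℝ := fun n => ‖xs n - z‖ ^ 2 with hEdef
  have hE_anti : Antitone E := antitone_nat_of_succ_le (fun n => by
    have h1 := hdec n
    have h2 := mul_nonneg (le_of_lt hc) (hg0 n)
    show ‖xs (n + 1) - z‖ ^ 2 ≤ ‖xs n - z‖ ^ 2
    linarith)
  have hEbdd : BddBelow (Set.range E) := ⟨0, by rintro _ ⟨n, rfl⟩; exact sq_nonneg _⟩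
  set L : ℝ := ⨅ n, E n with hLdef
  have hEL : Tendsto E atTop (nhds L) := tendsto_atTop_ciInf hE_anti hEbdd
  have hLle : ∀ n, L ≤ E n := fun n => ciInf_le hEbdd n
  -- cycle residual sums
  set R : ℕ → ℝ := fun c => ∑ j ∈ Finset.Ico (c * N) (c * N + N), ‖r j‖ with hRdef
  have hR0 : ∀ c, 0 ≤ R c := fun c => Finset.sum_nonneg (fun j _ => norm_nonneg _)
  have hRsq : ∀ c, R c ^ 2 ≤ N * ∑ j ∈ Finset.Ico (c * N) (c * N + N), g j := by
    intro c
    have h1 := Finset.sum_mul_sq_le_sq_mul_sq (Finset.Ico (c * N) (c * N + N))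
      (fun _ => (1 : ℝ)) (fun j => ‖r j‖)
    simp only [one_pow, one_mul, Finset.sum_const, Nat.card_Ico, nsmul_eq_mul, mul_one] at h1
    have hcard : c * N + N - c * N = N := by omega
    rw [hcard] at h1
    have hR : R c = ∑ j ∈ Finset.Ico (c * N) (c * N + N), ‖r j‖ := rfl
    have hgg : ∀ j, g j = ‖r j‖ ^ 2 := fun j => rfl
    rw [hR]
    calc (∑ j ∈ Finset.Ico (c * N) (c * N + N), ‖r j‖) ^ 2
        ≤ (N : ℝ) * ∑ j ∈ Finset.Ico (c * N) (c * N + N), ‖r j‖ ^ 2 := h1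
      _ = N * ∑ j ∈ Finset.Ico (c * N) (c * N + N), g j := by
          congr 1
  -- telescoping of iterates
  have hstepnorm : ∀ q : ℕ, ‖xs (q + 1) - xs q‖ ≤ ‖r q‖ := by
    intro q
    rw [hstep q]
    have he : xs q - (ContinuousLinearMap.adjoint (F' (q : Fin N) (xs q))) (r q) - xs q =
        -((ContinuousLinearMap.adjoint (F' (q : Fin N) (xs q))) (r q)) := by abel
    rw [he, norm_neg]
    exact hadj q (hmem q)
  have hchain : ∀ p q, p ≤ q → ‖xs q - xs p‖ ≤ ∑ j ∈ Finset.Ico p q, ‖r j‖ := by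
    intro p q hpq
    induction q, hpq using Nat.le_induction with
    | base => simp
    | succ q hpq ih =>
      have h1 : ‖xs (q + 1) - xs p‖ ≤ ‖xs (q + 1) - xs q‖ + ‖xs q - xs p‖ :=
        norm_sub_le_norm_sub_add_norm_sub _ _ _
      rw [Finset.sum_Ico_succ_top hpq]
      have h2 := hstepnorm q
      linarith
  have hsum_id : ∀ p q, p ≤ q → xs p - xs q =
      ∑ j ∈ Finset.Ico p q, (ContinuousLinearMap.adjoint (F' (j : Fin N) (xs j))) (r j) := by
    intro p q hpq
    induction q, hpq using Nat.le_induction with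
    | base => simp
    | succ q hpq ih =>
      rw [Finset.sum_Ico_succ_top hpq, ← ih, hstep q]
      abel
  -- Lipschitz
  have hlip : ∀ i, ∀ a ∈ closedBall x₀ ρ, ∀ b ∈ closedBall x₀ ρ, ‖F i a - F i b‖ ≤ ‖a - b‖ := by
    intro i a ha b hb
    have h := Convex.norm_image_sub_le_of_norm_hasFDerivWithin_le
      (fun v hv => (hdiff i v hv).hasFDerivWithinAt) (fun v hv => hscal i v hv)
      (convex_closedBall x₀ ρ) hb ha
    simpa using h
  -- residual of any component at cycle start
  have hQ : ∀ c (i : Fin N), ‖F i (xs (c * N)) - y i‖ ≤ 2 * R c := by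
    intro c i
    have hiN : i.val < N := i.isLt
    have hsFin : ((c * N + i.val : ℕ) : Fin N) = i := by push_cast; simp [Fin.natCast_self]
    have h1 : ‖F i (xs (c * N)) - y i‖ ≤
        ‖F i (xs (c * N)) - F i (xs (c * N + i.val))‖ + ‖F i (xs (c * N + i.val)) - y i‖ :=
      norm_sub_le_norm_sub_add_norm_sub _ _ _
    have h2 : F i (xs (c * N + i.val)) - y i = r (c * N + i.val) := by
      simp only [hrdef, hsFin]
    have h3 : ‖r (c * N + i.val)‖ ≤ R c := by
      refine Finset.single_le_sum (fun j _ => norm_nonneg (r j)) ?_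
      simp only [Finset.mem_Ico]
      omega
    have h4 : ‖F i (xs (c * N)) - F i (xs (c * N + i.val))‖ ≤ ‖xs (c * N) - xs (c * N + i.val)‖ :=
      hlip i _ (hmem _) _ (hmem _)
    have h5 : ‖xs (c * N) - xs (c * N + i.val)‖ ≤ R c := by
      rw [norm_sub_rev]
      refine le_trans (hchain (c * N) (c * N + i.val) (by omega)) ?_
      refine Finset.sum_le_sum_of_subset_of_nonneg
        (Finset.Ico_subset_Ico le_rfl (by omega)) (fun _ _ _ => norm_nonneg _)
    rw [h2] at h1
    linarith
  -- operator term bound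
  have hAterm : ∀ j l : ℕ, ‖F' (j : Fin N) (xs j) (xs l - z)‖ ≤
      3 * ‖r j‖ + (3 / 2) * ‖F (j : Fin N) (xs l) - y (j : Fin N)‖ := by
    intro j l
    have hrj : F ((j : ℕ) : Fin N) (xs j) - F ((j : ℕ) : Fin N) z = r j := by
      simp only [hrdef, hzsol]
    have h1 : ‖F' (j : Fin N) (xs j) (xs j - z)‖ ≤ (1 + η') * ‖r j‖ := by
      have h := htcc' (j : Fin N) (xs j) (hmem j) z hzρ
      rw [hrj] at h
      calc ‖F' (j : Fin N) (xs j) (xs j - z)‖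
          = ‖r j - (r j - F' (j : Fin N) (xs j) (xs j - z))‖ := congrArg norm (by abel)
        _ ≤ ‖r j‖ + ‖r j - F' (j : Fin N) (xs j) (xs j - z)‖ := norm_sub_le _ _
        _ ≤ (1 + η') * ‖r j‖ := by linarith
    have h2 : ‖F' (j : Fin N) (xs j) (xs j - xs l)‖ ≤
        (1 + η') * (‖r j‖ + ‖F (j : Fin N) (xs l) - y (j : Fin N)‖) := by
      have h := htcc' (j : Fin N) (xs j) (hmem j) (xs l) (hmem l)
      have hAle : ‖F' (j : Fin N) (xs j) (xs j - xs l)‖ ≤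
          (1 + η') * ‖F (j : Fin N) (xs j) - F (j : Fin N) (xs l)‖ := by
        calc ‖F' (j : Fin N) (xs j) (xs j - xs l)‖
            = ‖(F (j : Fin N) (xs j) - F (j : Fin N) (xs l)) -
                (F (j : Fin N) (xs j) - F (j : Fin N) (xs l) -
                  F' (j : Fin N) (xs j) (xs j - xs l))‖ := congrArg norm (by abel)
          _ ≤ ‖F (j : Fin N) (xs j) - F (j : Fin N) (xs l)‖ +
              ‖F (j : Fin N) (xs j) - F (j : Fin N) (xs l) -
                F' (j : Fin N) (xs j) (xs j - xs l)‖ := norm_sub_le _ _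
          _ ≤ (1 + η') * ‖F (j : Fin N) (xs j) - F (j : Fin N) (xs l)‖ := by linarith
      have hFF : ‖F (j : Fin N) (xs j) - F (j : Fin N) (xs l)‖ ≤
          ‖r j‖ + ‖F (j : Fin N) (xs l) - y (j : Fin N)‖ := by
        have he : F (j : Fin N) (xs j) - F (j : Fin N) (xs l) =
            r j - (F (j : Fin N) (xs l) - y (j : Fin N)) := by
          simp only [hrdef]; abel
        rw [he]; exact norm_sub_le _ _
      exact hAle.trans (mul_le_mul_of_nonneg_left hFF (by linarith))
    have hsplit : F' (j : Fin N) (xs j) (xs l - z) =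
        F' (j : Fin N) (xs j) (xs j - z) - F' (j : Fin N) (xs j) (xs j - xs l) := by
      rw [← map_sub]; congr 1; abel
    rw [hsplit]
    have h3 := norm_sub_le (F' (j : Fin N) (xs j) (xs j - z)) (F' (j : Fin N) (xs j) (xs j - xs l))
    nlinarith [norm_nonneg (r j), norm_nonneg (F (j : Fin N) (xs l) - y (j : Fin N)), hη'2, hη'0]
  -- cycle decomposition of sums
  have hdecomp : ∀ (f : ℕ → ℝ) (a b' : ℕ), a ≤ b' →
      ∑ j ∈ Finset.Ico (a * N) (b' * N), f j =
        ∑ c' ∈ Finset.Ico a b', ∑ j ∈ Finset.Ico (c' * N) (c' * N + N), f j := by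
    intro f a b' hb'
    induction b', hb' using Nat.le_induction with
    | base => simp
    | succ b' hb' ih =>
      have h1 : a * N ≤ b' * N := Nat.mul_le_mul_right N hb'
      rw [show (b' + 1) * N = b' * N + N from by ring,
        ← Finset.sum_Ico_consecutive f h1 (Nat.le_add_right _ _), ih,
        Finset.sum_Ico_succ_top hb']
  -- inner product sum bound
  have hIPsum : ∀ (a b c : ℕ), (∀ c' ∈ Finset.Ico a b, R c ≤ R c') → ∀ p q, a * N ≤ p → q ≤ b * N →
      |∑ j ∈ Finset.Ico p q, ⟪r j, F' (j : Fin N) (xs j) (xs (c * N) - z)⟫| ≤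
        3 * (N + 1) * t (a * N) := by
    intro a b c hmin p q hp hq
    have hterm : ∀ j ∈ Finset.Ico p q,
        |⟪r j, F' (j : Fin N) (xs j) (xs (c * N) - z)⟫| ≤ 3 * g j + 3 * R c * ‖r j‖ := by
      intro j _
      have h2 := hAterm j (c * N)
      have h3 := hQ c (j : Fin N)
      calc |⟪r j, F' (j : Fin N) (xs j) (xs (c * N) - z)⟫|
          ≤ ‖r j‖ * ‖F' (j : Fin N) (xs j) (xs (c * N) - z)‖ := abs_real_inner_le_norm _ _
        _ ≤ ‖r j‖ * (3 * ‖r j‖ + (3 / 2) * (2 * R c)) := by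
            refine mul_le_mul_of_nonneg_left (h2.trans ?_) (norm_nonneg _)
            linarith
        _ = 3 * g j + 3 * R c * ‖r j‖ := by
            have hgj : g j = ‖r j‖ ^ 2 := rfl
            rw [hgj]; ring
    have habs := Finset.abs_sum_le_sum_abs
      (fun j => ⟪r j, F' (j : Fin N) (xs j) (xs (c * N) - z)⟫) (Finset.Ico p q)
    have hsplit : ∑ j ∈ Finset.Ico p q, |⟪r j, F' (j : Fin N) (xs j) (xs (c * N) - z)⟫| ≤
        ∑ j ∈ Finset.Ico p q, (3 * g j + 3 * R c * ‖r j‖) := Finset.sum_le_sum hterm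
    have hsum1 : ∑ j ∈ Finset.Ico p q, 3 * g j ≤ 3 * t (a * N) := by
      rw [← Finset.mul_sum]
      have := (hIco p q).trans (ht_anti hp)
      linarith
    have hsum2 : ∑ j ∈ Finset.Ico p q, 3 * R c * ‖r j‖ ≤ 3 * ((N : ℝ) * t (a * N)) := by
      rw [← Finset.mul_sum, mul_assoc]
      refine mul_le_mul_of_nonneg_left ?_ (by norm_num)
      -- R c * ∑ ‖r j‖ ≤ N * t (a*N)
      rcases le_or_gt a b with hab | hab
      · have hext : ∑ j ∈ Finset.Ico p q, ‖r j‖ ≤ ∑ j ∈ Finset.Ico (a * N) (b * N), ‖r j‖ :=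
          Finset.sum_le_sum_of_subset_of_nonneg (Finset.Ico_subset_Ico hp hq)
            (fun _ _ _ => norm_nonneg _)
        have hstep1 : R c * ∑ j ∈ Finset.Ico p q, ‖r j‖ ≤
            R c * ∑ j ∈ Finset.Ico (a * N) (b * N), ‖r j‖ :=
          mul_le_mul_of_nonneg_left hext (hR0 c)
        have hd1 : ∑ j ∈ Finset.Ico (a * N) (b * N), ‖r j‖ = ∑ c' ∈ Finset.Ico a b, R c' :=
          hdecomp (fun j => ‖r j‖) a b hab
        have hstep2 : R c * ∑ c' ∈ Finset.Ico a b, R c' ≤ ∑ c' ∈ Finset.Ico a b, R c' ^ 2 := by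
          rw [Finset.mul_sum]
          refine Finset.sum_le_sum (fun c' hc' => ?_)
          have h1 := hmin c' hc'
          have h2 := hR0 c'
          nlinarith
        have hstep3 : ∑ c' ∈ Finset.Ico a b, R c' ^ 2 ≤
            (N : ℝ) * ∑ j ∈ Finset.Ico (a * N) (b * N), g j := by
          rw [hdecomp g a b hab, Finset.mul_sum]
          exact Finset.sum_le_sum (fun c' _ => hRsq c')
        have hstep4 : (N : ℝ) * ∑ j ∈ Finset.Ico (a * N) (b * N), g j ≤ (N : ℝ) * t (a * N) :=
          mul_le_mul_of_nonneg_left (hIco _ _) (Nat.cast_nonneg N)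
        calc R c * ∑ j ∈ Finset.Ico p q, ‖r j‖
            ≤ R c * ∑ j ∈ Finset.Ico (a * N) (b * N), ‖r j‖ := hstep1
          _ = R c * ∑ c' ∈ Finset.Ico a b, R c' := by rw [hd1]
          _ ≤ ∑ c' ∈ Finset.Ico a b, R c' ^ 2 := hstep2
          _ ≤ (N : ℝ) * ∑ j ∈ Finset.Ico (a * N) (b * N), g j := hstep3
          _ ≤ (N : ℝ) * t (a * N) := hstep4
      · -- b < a : the interval is empty
        have hqp : q < p := by
          have h1 : b * N < a * N := (Nat.mul_lt_mul_right hN).mpr hab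
          omega
        have hempty : Finset.Ico p q = ∅ := Finset.Ico_eq_empty (by omega)
        rw [hempty]
        simp only [Finset.sum_empty, mul_zero]
        exact mul_nonneg (Nat.cast_nonneg N) (ht_nonneg _)
    calc |∑ j ∈ Finset.Ico p q, ⟪r j, F' (j : Fin N) (xs j) (xs (c * N) - z)⟫|
        ≤ ∑ j ∈ Finset.Ico p q, |⟪r j, F' (j : Fin N) (xs j) (xs (c * N) - z)⟫| := habs
      _ ≤ ∑ j ∈ Finset.Ico p q, (3 * g j + 3 * R c * ‖r j‖) := hsplit
      _ = ∑ j ∈ Finset.Ico p q, 3 * g j + ∑ j ∈ Finset.Ico p q, 3 * R c * ‖r j‖ :=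
          Finset.sum_add_distrib
      _ ≤ 3 * t (a * N) + 3 * ((N : ℝ) * t (a * N)) := add_le_add hsum1 hsum2
      _ = 3 * (N + 1) * t (a * N) := by ring
  -- main distance bound at cycle starts
  set D : ℕ → ℝ := fun a => 2 * (E (a * N) - L) + 24 * (N + 1) * t (a * N) with hDdef
  have hD0 : ∀ a, 0 ≤ D a := by
    intro a
    have h1 := hLle (a * N)
    have h2 := ht_nonneg (a * N)
    have h3 : (0:ℝ) ≤ 24 * ((N:ℝ) + 1) * t (a * N) := by positivity
    show (0:ℝ) ≤ 2 * (E (a * N) - L) + 24 * (N + 1) * t (a * N)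
    linarith
  have hD_anti : Antitone D := by
    intro a b hab
    have h1 : E (b * N) ≥ L := hLle _
    have h2 : E (b * N) ≤ E (a * N) := hE_anti (Nat.mul_le_mul_right N hab)
    have h3 : t (b * N) ≤ t (a * N) := ht_anti (Nat.mul_le_mul_right N hab)
    have h4 : (0:ℝ) ≤ 24 * ((N:ℝ) + 1) := by positivity
    have h5 := mul_le_mul_of_nonneg_left h3 h4
    show 2 * (E (b * N) - L) + 24 * (N + 1) * t (b * N) ≤
      2 * (E (a * N) - L) + 24 * (N + 1) * t (a * N)
    linarith
  have hvdist : ∀ a b, a ≤ b → ‖xs (b * N) - xs (a * N)‖ ^ 2 ≤ D a := by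
    intro a b hab
    rcases eq_or_lt_of_le hab with rfl | hlt
    · simpa using hD0 a
    · obtain ⟨cm, hcm_mem, hcm_min⟩ := Finset.exists_min_image (Finset.Ico a b) R
        ⟨a, Finset.mem_Ico.mpr ⟨le_rfl, hlt⟩⟩
      obtain ⟨hcm1, hcm2⟩ := Finset.mem_Ico.mp hcm_mem
      have hal : a * N ≤ cm * N := Nat.mul_le_mul_right N hcm1
      have hlb : cm * N ≤ b * N := Nat.mul_le_mul_right N (le_of_lt hcm2)
      -- inner product identity
      have hsum_ip : ∀ p q, p ≤ q → ⟪xs p - xs q, xs (cm * N) - z⟫ =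
          ∑ j ∈ Finset.Ico p q, ⟪r j, F' (j : Fin N) (xs j) (xs (cm * N) - z)⟫ := by
        intro p q hpq
        rw [hsum_id p q hpq, sum_inner]
        exact Finset.sum_congr rfl
          (fun j _ => ContinuousLinearMap.adjoint_inner_left _ _ _)
      have hIP1 : |⟪xs (cm * N) - xs (b * N), xs (cm * N) - z⟫| ≤ 3 * (N + 1) * t (a * N) := by
        rw [hsum_ip (cm * N) (b * N) hlb]
        exact hIPsum a b cm hcm_min (cm * N) (b * N) hal le_rfl
      have hIP2 : |⟪xs (cm * N) - xs (a * N), xs (cm * N) - z⟫| ≤ 3 * (N + 1) * t (a * N) := by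
        have hneg : xs (cm * N) - xs (a * N) = -(xs (a * N) - xs (cm * N)) := by abel
        rw [hneg, inner_neg_left, abs_neg, hsum_ip (a * N) (cm * N) hal]
        exact hIPsum a b cm hcm_min (a * N) (cm * N) le_rfl hlb
      -- norm identity
      have hnid : ∀ m, ‖xs m - xs (cm * N)‖ ^ 2 =
          E m - E (cm * N) + 2 * ⟪xs (cm * N) - xs m, xs (cm * N) - z⟫ := by
        intro m
        have h := norm_sub_sq_real (xs m - z) (xs (cm * N) - z)
        have h2 : xs m - z - (xs (cm * N) - z) = xs m - xs (cm * N) := by abel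
        rw [h2] at h
        have h4 : xs (cm * N) - xs m = (xs (cm * N) - z) - (xs m - z) := by abel
        have h3 : ⟪xs (cm * N) - xs m, xs (cm * N) - z⟫ =
            ‖xs (cm * N) - z‖ ^ 2 - ⟪xs m - z, xs (cm * N) - z⟫ := by
          rw [h4, inner_sub_left, real_inner_self_eq_norm_sq]
        show ‖xs m - xs (cm * N)‖ ^ 2 =
          ‖xs m - z‖ ^ 2 - ‖xs (cm * N) - z‖ ^ 2 + 2 * ⟪xs (cm * N) - xs m, xs (cm * N) - z⟫
        rw [h, h3]
        ring
      have h1 := hnid (b * N)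
      have h2 := hnid (a * N)
      have hEb : E (b * N) ≤ E (cm * N) := hE_anti hlb
      have hLcm : L ≤ E (cm * N) := hLle _
      have hs1 : ‖xs (b * N) - xs (cm * N)‖ ^ 2 ≤ 6 * (N + 1) * t (a * N) := by
        have := abs_le.mp hIP1
        nlinarith
      have hs2 : ‖xs (a * N) - xs (cm * N)‖ ^ 2 ≤
          (E (a * N) - L) + 6 * (N + 1) * t (a * N) := by
        have := abs_le.mp hIP2
        nlinarith
      have htri : ‖xs (b * N) - xs (a * N)‖ ≤
          ‖xs (b * N) - xs (cm * N)‖ + ‖xs (cm * N) - xs (a * N)‖ :=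
        norm_sub_le_norm_sub_add_norm_sub _ _ _
      have hrev : ‖xs (cm * N) - xs (a * N)‖ = ‖xs (a * N) - xs (cm * N)‖ := norm_sub_rev _ _
      rw [hrev] at htri
      show ‖xs (b * N) - xs (a * N)‖ ^ 2 ≤ 2 * (E (a * N) - L) + 24 * (N + 1) * t (a * N)
      have hn1 := norm_nonneg (xs (b * N) - xs (a * N))
      have hn2 := norm_nonneg (xs (b * N) - xs (cm * N))
      have hn3 := norm_nonneg (xs (a * N) - xs (cm * N))
      nlinarith [sq_nonneg (‖xs (b * N) - xs (cm * N)‖ - ‖xs (a * N) - xs (cm * N)‖),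
        mul_self_le_mul_self hn1 htri]
  -- D tends to zero
  have hmulT : Tendsto (fun a : ℕ => a * N) atTop atTop := by
    apply tendsto_atTop_mono (fun a => Nat.le_mul_of_pos_right a hN) tendsto_id
  have hD_to0 : Tendsto D atTop (nhds 0) := by
    have h1 : Tendsto (fun a : ℕ => E (a * N) - L) atTop (nhds 0) := by
      have h0 := (hEL.comp hmulT).sub (tendsto_const_nhds (x := L) (f := atTop))
      simpa [Function.comp] using h0
    have h2 : Tendsto (fun a : ℕ => t (a * N)) atTop (nhds 0) := ht0.comp hmulT
    have := (h1.const_mul 2).add (h2.const_mul (24 * ((N:ℝ) + 1)))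
    simpa using this
  -- gap to previous cycle start
  have hsqrt_r : ∀ p j, p ≤ j → ‖r j‖ ≤ Real.sqrt (t p) := by
    intro p j hpj
    have h4 : ‖r j‖ = Real.sqrt (g j) := by
      have : g j = ‖r j‖ ^ 2 := rfl
      rw [this, Real.sqrt_sq (norm_nonneg _)]
    rw [h4]
    exact Real.sqrt_le_sqrt (hgle p j hpj)
  have hgap : ∀ n, ‖xs n - xs ((n / N) * N)‖ ≤ N * Real.sqrt (t ((n / N) * N)) := by
    intro n
    have h1 : (n / N) * N ≤ n := Nat.div_mul_le_self n N
    have hmod := Nat.div_add_mod n N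
    have hmodlt := Nat.mod_lt n hN
    calc ‖xs n - xs ((n / N) * N)‖
        ≤ ∑ j ∈ Finset.Ico ((n / N) * N) n, ‖r j‖ := hchain _ _ h1
      _ ≤ ∑ _j ∈ Finset.Ico ((n / N) * N) n, Real.sqrt (t ((n / N) * N)) :=
          Finset.sum_le_sum (fun j hj => hsqrt_r _ j (Finset.mem_Ico.mp hj).1)
      _ = ((n - (n / N) * N : ℕ) : ℝ) * Real.sqrt (t ((n / N) * N)) := by
          rw [Finset.sum_const, Nat.card_Ico, nsmul_eq_mul]
      _ ≤ N * Real.sqrt (t ((n / N) * N)) := by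
          refine mul_le_mul_of_nonneg_right ?_ (Real.sqrt_nonneg _)
          have h6 : n ≤ N + (n / N) * N := by
            calc n = N * (n / N) + n % N := (Nat.div_add_mod n N).symm
              _ ≤ N * (n / N) + N := Nat.add_le_add_left hmodlt.le _
              _ = N + (n / N) * N := by ring
          exact_mod_cast Nat.cast_le.mpr (Nat.sub_le_of_le_add h6)
  -- Cauchy
  have hcauchy : CauchySeq xs := by
    set bb : ℕ → ℝ := fun K =>
      2 * (N : ℝ) * Real.sqrt (t ((K / N) * N)) + Real.sqrt (D (K / N)) with hbbdef
    have hmain : ∀ K n m : ℕ, K ≤ n → K ≤ m → n ≤ m → dist (xs n) (xs m) ≤ bb K := by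
      intro K n m hKn hKm hnm
      have hq : n / N ≤ m / N := Nat.div_le_div_right hnm
      have hKq : K / N ≤ n / N := Nat.div_le_div_right hKn
      have hKqm : K / N ≤ m / N := le_trans hKq hq
      rw [dist_eq_norm]
      have htri : ‖xs n - xs m‖ ≤ ‖xs n - xs ((n / N) * N)‖ +
          ‖xs ((m / N) * N) - xs ((n / N) * N)‖ + ‖xs m - xs ((m / N) * N)‖ := by
        calc ‖xs n - xs m‖
            ≤ ‖xs n - xs ((n / N) * N)‖ + ‖xs ((n / N) * N) - xs m‖ :=
              norm_sub_le_norm_sub_add_norm_sub _ _ _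
          _ ≤ ‖xs n - xs ((n / N) * N)‖ +
              (‖xs ((n / N) * N) - xs ((m / N) * N)‖ + ‖xs ((m / N) * N) - xs m‖) := by
              have := norm_sub_le_norm_sub_add_norm_sub
                (xs ((n / N) * N)) (xs ((m / N) * N)) (xs m)
              linarith
          _ = ‖xs n - xs ((n / N) * N)‖ +
              ‖xs ((m / N) * N) - xs ((n / N) * N)‖ + ‖xs m - xs ((m / N) * N)‖ := by
              rw [norm_sub_rev (xs ((n / N) * N)) (xs ((m / N) * N)), norm_sub_rev (xs ((m / N) * N)) (xs m)]
              ring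
      have hsub1 : (K / N) * N ≤ (n / N) * N := Nat.mul_le_mul_right N hKq
      have hsub2 : (K / N) * N ≤ (m / N) * N := Nat.mul_le_mul_right N hKqm
      have ht1 : ‖xs n - xs ((n / N) * N)‖ ≤ (N : ℝ) * Real.sqrt (t ((K / N) * N)) :=
        (hgap n).trans (mul_le_mul_of_nonneg_left
          (Real.sqrt_le_sqrt (ht_anti hsub1)) (Nat.cast_nonneg N))
      have ht3 : ‖xs m - xs ((m / N) * N)‖ ≤ (N : ℝ) * Real.sqrt (t ((K / N) * N)) :=
        (hgap m).trans (mul_le_mul_of_nonneg_left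
          (Real.sqrt_le_sqrt (ht_anti hsub2)) (Nat.cast_nonneg N))
      have ht2 : ‖xs ((m / N) * N) - xs ((n / N) * N)‖ ≤ Real.sqrt (D (K / N)) := by
        have h := hvdist (n / N) (m / N) hq
        have h2 : ‖xs ((m / N) * N) - xs ((n / N) * N)‖ ^ 2 ≤ D (K / N) :=
          h.trans (hD_anti hKq)
        exact (Real.le_sqrt (norm_nonneg _) (hD0 _)).mpr h2
      calc ‖xs n - xs m‖ ≤ ‖xs n - xs ((n / N) * N)‖ +
          ‖xs ((m / N) * N) - xs ((n / N) * N)‖ + ‖xs m - xs ((m / N) * N)‖ := htri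
        _ ≤ 2 * (N : ℝ) * Real.sqrt (t ((K / N) * N)) + Real.sqrt (D (K / N)) := by
            linarith
    have hdiv : Tendsto (fun K : ℕ => K / N) atTop atTop :=
      tendsto_atTop_atTop.2 (fun M => ⟨M * N, fun K hK => (Nat.le_div_iff_mul_le hN).2 hK⟩)
    have hbb0 : Tendsto bb atTop (nhds 0) := by
      have hc1 : Tendsto (fun K : ℕ => t ((K / N) * N)) atTop (nhds 0) :=
        ht0.comp (hmulT.comp hdiv)
      have hs1 : Tendsto (fun K : ℕ => Real.sqrt (t ((K / N) * N))) atTop (nhds 0) := by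
        have := (Real.continuous_sqrt.tendsto 0).comp hc1
        simpa [Function.comp_def] using this
      have hc2 : Tendsto (fun K : ℕ => D (K / N)) atTop (nhds 0) := hD_to0.comp hdiv
      have hs2 : Tendsto (fun K : ℕ => Real.sqrt (D (K / N))) atTop (nhds 0) := by
        have := (Real.continuous_sqrt.tendsto 0).comp hc2
        simpa [Function.comp_def] using this
      have := (hs1.const_mul (2 * (N : ℝ))).add hs2
      simpa using this
    refine cauchySeq_of_le_tendsto_0 bb (fun n m K hKn hKm => ?_) hbb0
    rcases le_total n m with h | h
    · exact hmain K n m hKn hKm h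
    · rw [dist_comm]; exact hmain K m n hKm hKn h
  obtain ⟨xstar, hxstar⟩ := cauchySeq_tendsto_of_complete hcauchy
  refine ⟨xstar, hxstar, ?_⟩
  intro i
  have hxstarB : xstar ∈ closedBall x₀ ρ :=
    isClosed_closedBall.mem_of_tendsto hxstar (Eventually.of_forall hmem)
  have hcont : ContinuousAt (F i) xstar := (hdiff i xstar hxstarB).continuousAt
  have hφ : Tendsto (fun c : ℕ => c * N + i.val) atTop atTop :=
    tendsto_atTop_mono (fun c => le_trans (Nat.le_mul_of_pos_right c hN) (Nat.le_add_right _ _))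
      tendsto_id
  have h1 : Tendsto (fun c : ℕ => F i (xs (c * N + i.val))) atTop (nhds (F i xstar)) :=
    hcont.tendsto.comp (hxstar.comp hφ)
  have hrn0 : Tendsto r atTop (nhds 0) := by
    have hgn : Tendsto g atTop (nhds 0) := hsum.tendsto_atTop_zero
    rw [tendsto_zero_iff_norm_tendsto_zero]
    have hrg : ∀ n, ‖r n‖ = Real.sqrt (g n) := by
      intro n
      have : g n = ‖r n‖ ^ 2 := rfl
      rw [this, Real.sqrt_sq (norm_nonneg _)]
    simp only [hrg]
    have := (Real.continuous_sqrt.tendsto 0).comp hgn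
    simpa [Function.comp_def] using this
  have hFin : ∀ c : ℕ, ((c * N + i.val : ℕ) : Fin N) = i := by
    intro c; push_cast; simp [Fin.natCast_self]
  have h2 : Tendsto (fun c : ℕ => F i (xs (c * N + i.val))) atTop (nhds (y i)) := by
    have : ∀ c : ℕ, F i (xs (c * N + i.val)) = r (c * N + i.val) + y i := by
      intro c
      rw [hrdef]
      simp only [hFin c]
      abel
    simp only [this]
    have := (hrn0.comp hφ).add (tendsto_const_nhds (x := y i))
    simpa using this
  exact tendsto_nhds_unique h1 h2
end

section
/- Assume the system F_i(x) = y^i has a solution in B_{ρ/2}(x_0), let x† be the unique solution of the system with minimal distance to x_0, and assume the null-space condition N(F_i'(x†)) ⊆ N(F_i'(x)) for all x ∈ B_ρ(x_0) and all i = 0,…,N−1 (here N denotes the kernel of a continuous linear operator). Then the lLK iterates with exact data (y^{δ,i} = y^i, δ^i = 0) converge to x†. -/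
open Metric Filter Fin.NatCast

open scoped RealInnerProductSpace

set_option maxHeartbeats 4000000 in
/-- **Convergence of the loping Landweber–Kaczmarz method for exact data to the
minimal-distance solution under the null-space condition.** -/
theorem loping_landweber_kaczmarz_exact_data_convergence_minimal_distance
    {X Y : Type*} [NormedAddCommGroup X] [InnerProductSpace ℝ X] [CompleteSpace X]
    [NormedAddCommGroup Y] [InnerProductSpace ℝ Y] [CompleteSpace Y]
    {N : ℕ} [NeZero N]
    (F : Fin N → X → Y) (F' : Fin N → X → X →L[ℝ] Y)
    (x₀ : X) (ρ : ℝ) (hρ : 0 < ρ)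
    (hdiff : ∀ i, ∀ z ∈ closedBall x₀ ρ, HasFDerivAt (F i) (F' i z) z)
    (hscal : ∀ i, ∀ z ∈ closedBall x₀ ρ, ‖F' i z‖ ≤ 1)
    (η : ℝ) (hη : η < 1 / 2)
    (htcc : ∀ i, ∀ z ∈ closedBall x₀ ρ, ∀ z' ∈ closedBall x₀ ρ,
      ‖F i z - F i z' - F' i z (z - z')‖ ≤ η * ‖F i z - F i z'‖)
    (y : Fin N → Y)
    (hex : ∃ z ∈ closedBall x₀ (ρ / 2), ∀ i, F i z = y i)
    (xs : ℕ → X) (hxs0 : xs 0 = x₀)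
    (ω : ℕ → ℝ)
    (hω : ∀ n, ω n = if 0 < ‖F (n : Fin N) (xs n) - y (n : Fin N)‖ then 1 else 0)
    (hxs : ∀ n, xs (n + 1) = xs n -
      ω n • (ContinuousLinearMap.adjoint (F' (n : Fin N) (xs n)))
        (F (n : Fin N) (xs n) - y (n : Fin N)))
    (xdag : X) (hdagsol : ∀ i, F i xdag = y i)
    (hdagmin : ∀ z ∈ closedBall x₀ ρ, (∀ i, F i z = y i) → ‖xdag - x₀‖ ≤ ‖z - x₀‖)
    (hdaguniq : ∀ z ∈ closedBall x₀ ρ, (∀ i, F i z = y i) →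
      ‖z - x₀‖ = ‖xdag - x₀‖ → z = xdag)
    (hkern : ∀ i, ∀ z ∈ closedBall x₀ ρ,
      LinearMap.ker (F' i xdag : X →ₗ[ℝ] Y) ≤ LinearMap.ker (F' i z : X →ₗ[ℝ] Y)) :
    Tendsto xs atTop (nhds xdag) := by
  have hN : 0 < N := Nat.pos_of_ne_zero (NeZero.ne N)
  have hN1 : (1:ℕ) ≤ N := hN
  obtain ⟨zst, hzst_ball, hzst_sol⟩ := hex
  have hzst_ball' : zst ∈ closedBall x₀ ρ :=
    closedBall_subset_closedBall (by linarith) hzst_ball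
  have hdag2 : ‖xdag - x₀‖ ≤ ρ / 2 := by
    have h1 := hdagmin zst hzst_ball' hzst_sol
    have h2 := mem_closedBall_iff_norm.mp hzst_ball
    linarith
  have hdagball : xdag ∈ closedBall x₀ ρ := by
    rw [mem_closedBall_iff_norm]; linarith
  set η₁ : ℝ := max η 0 with hη₁def
  have hη₁0 : 0 ≤ η₁ := le_max_right _ _
  have hη₁h : η₁ < 1/2 := max_lt hη (by norm_num)
  have htcc1 : ∀ i, ∀ z ∈ closedBall x₀ ρ, ∀ z' ∈ closedBall x₀ ρ,
      ‖F i z - F i z' - F' i z (z - z')‖ ≤ η₁ * ‖F i z - F i z'‖ := by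
    intro i z hz z' hz'
    exact le_trans (htcc i z hz z' hz')
      (mul_le_mul_of_nonneg_right (le_max_left _ _) (norm_nonneg _))
  -- abbreviations
  obtain ⟨r, hr⟩ : ∃ r : ℕ → Y, ∀ n, r n = F (n : Fin N) (xs n) - y (n : Fin N) :=
    ⟨_, fun _ => rfl⟩
  obtain ⟨s, hs⟩ : ∃ s : ℕ → X,
      ∀ n, s n = (ContinuousLinearMap.adjoint (F' (n : Fin N) (xs n))) (r n) :=
    ⟨_, fun _ => rfl⟩
  obtain ⟨g, hg⟩ : ∃ g : ℕ → ℝ, ∀ n, g n = ‖r n‖^2 := ⟨_, fun _ => rfl⟩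
  obtain ⟨T, hT⟩ : ∃ T : ℕ → ℝ, ∀ m, T m = ∑ n ∈ Finset.range m, g n := ⟨_, fun _ => rfl⟩
  obtain ⟨R, hR⟩ : ∃ R : ℕ → ℝ, ∀ q, R q = ∑ j ∈ Finset.range N, g (q*N + j) :=
    ⟨_, fun _ => rfl⟩
  obtain ⟨D, hD⟩ : ∃ D : ℕ → ℝ, ∀ q, D q = ∑ j ∈ Finset.range N, ‖r (q*N + j)‖ :=
    ⟨_, fun _ => rfl⟩
  have hgnn : ∀ n, 0 ≤ g n := fun n => by rw [hg]; positivity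
  have hRnn : ∀ q, 0 ≤ R q := fun q => by
    rw [hR]; exact Finset.sum_nonneg fun j _ => hgnn _
  have hDnn : ∀ q, 0 ≤ D q := fun q => by
    rw [hD]; exact Finset.sum_nonneg fun j _ => norm_nonneg _
  -- the loping weight is irrelevant for exact data
  have hstep : ∀ n, xs (n+1) = xs n - s n := by
    intro n
    rw [hxs n, hω n, hs n, hr n]
    split_ifs with h
    · rw [one_smul]
    · have h0 : F (n : Fin N) (xs n) - y (n : Fin N) = 0 :=
        norm_eq_zero.mp (le_antisymm (not_lt.mp h) (norm_nonneg _))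
      rw [h0]
      simp
  have htel : ∀ a b, a ≤ b → xs a - xs b = ∑ n ∈ Finset.Ico a b, s n := by
    intro a b hab
    induction b, hab using Nat.le_induction with
    | base => simp
    | succ b hab ih =>
      rw [Finset.sum_Ico_succ_top hab, ← ih, hstep b]
      abel
  -- pointwise operator norm bound
  have hApt : ∀ (i : Fin N) (z), z ∈ closedBall x₀ ρ → ∀ v : X, ‖F' i z v‖ ≤ ‖v‖ := by
    intro i z hz v
    calc ‖F' i z v‖ ≤ ‖F' i z‖ * ‖v‖ := (F' i z).le_opNorm v
    _ ≤ 1 * ‖v‖ := mul_le_mul_of_nonneg_right (hscal i z hz) (norm_nonneg _)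
    _ = ‖v‖ := one_mul _
  have hLip : ∀ (i : Fin N), ∀ a ∈ closedBall x₀ ρ, ∀ b ∈ closedBall x₀ ρ,
      ‖F i a - F i b‖ ≤ 2 * ‖a - b‖ := by
    intro i a ha b hb
    have h1 := htcc1 i a ha b hb
    have h2 : ‖F i a - F i b‖ - ‖F' i a (a - b)‖ ≤ ‖F i a - F i b - F' i a (a - b)‖ :=
      norm_sub_norm_le _ _
    have h3 := hApt i a ha (a - b)
    nlinarith [norm_nonneg (F i a - F i b), norm_nonneg (a - b)]
  have hAtcc : ∀ (i : Fin N), ∀ a ∈ closedBall x₀ ρ, ∀ b ∈ closedBall x₀ ρ,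
      ‖F' i a (a - b)‖ ≤ (3/2) * ‖F i a - F i b‖ := by
    intro i a ha b hb
    have h1 := htcc1 i a ha b hb
    have h2 : ‖F' i a (a - b)‖ ≤ ‖F i a - F i b‖ + ‖F i a - F i b - F' i a (a - b)‖ := by
      have h2' := norm_sub_le (F i a - F i b) (F i a - F i b - F' i a (a - b))
      have he : (F i a - F i b) - (F i a - F i b - F' i a (a - b)) = F' i a (a - b) := by
        abel
      rw [he] at h2'
      exact h2'
    nlinarith [norm_nonneg (F i a - F i b)]
  have hsle : ∀ n, xs n ∈ closedBall x₀ ρ → ‖s n‖ ≤ ‖r n‖ := by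
    intro n hn
    rw [hs n]
    calc ‖(ContinuousLinearMap.adjoint (F' (n : Fin N) (xs n))) (r n)‖
        ≤ ‖ContinuousLinearMap.adjoint (F' (n : Fin N) (xs n))‖ * ‖r n‖ :=
          ContinuousLinearMap.le_opNorm _ _
      _ ≤ 1 * ‖r n‖ := by
          rw [ContinuousLinearMap.adjoint.norm_map]
          exact mul_le_mul_of_nonneg_right (hscal _ _ hn) (norm_nonneg _)
      _ = ‖r n‖ := one_mul _
  -- descent inequality
  have hdesc : ∀ n, xs n ∈ closedBall x₀ ρ →
      ‖xs (n+1) - xdag‖^2 + (1 - 2*η₁) * g n ≤ ‖xs n - xdag‖^2 := by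
    intro n hn
    have h1 : xs (n+1) - xdag = (xs n - xdag) - s n := by rw [hstep]; abel
    have h2 : ‖(xs n - xdag) - s n‖^2
        = ‖xs n - xdag‖^2 - 2 * ⟪xs n - xdag, s n⟫ + ‖s n‖^2 :=
      norm_sub_sq_real _ _
    have h3 : ⟪xs n - xdag, s n⟫ = ⟪r n, F' (n : Fin N) (xs n) (xs n - xdag)⟫ := by
      rw [real_inner_comm, hs n]
      exact ContinuousLinearMap.adjoint_inner_left _ _ _
    have htcc' : ‖r n - F' (n : Fin N) (xs n) (xs n - xdag)‖ ≤ η₁ * ‖r n‖ := by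
      have := htcc1 (n : Fin N) (xs n) hn xdag hdagball
      rw [hdagsol, ← hr n] at this
      exact this
    have h4 : (1 - η₁) * ‖r n‖^2 ≤ ⟪r n, F' (n : Fin N) (xs n) (xs n - xdag)⟫ := by
      have e1 : ⟪r n, F' (n : Fin N) (xs n) (xs n - xdag)⟫
          = ⟪r n, r n⟫ - ⟪r n, r n - F' (n : Fin N) (xs n) (xs n - xdag)⟫ := by
        rw [inner_sub_right]
        ring
      have e2 : |⟪r n, r n - F' (n : Fin N) (xs n) (xs n - xdag)⟫|
          ≤ ‖r n‖ * (η₁ * ‖r n‖) := by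
        refine le_trans (abs_real_inner_le_norm _ _) ?_
        exact mul_le_mul_of_nonneg_left htcc' (norm_nonneg _)
      have e3 : ⟪r n, r n⟫ = ‖r n‖^2 := real_inner_self_eq_norm_sq _
      rw [e1, e3]
      have := abs_le.mp e2
      nlinarith
    have h5 : ‖s n‖^2 ≤ ‖r n‖^2 := by
      have := hsle n hn
      nlinarith [norm_nonneg (s n)]
    rw [h1, hg n]
    nlinarith
  -- confinement
  have hball : ∀ n, xs n ∈ closedBall x₀ ρ ∧ ‖xs n - xdag‖ ≤ ρ/2 := by
    intro n
    induction n with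
    | zero =>
      constructor
      · rw [hxs0]; exact mem_closedBall_self hρ.le
      · rw [hxs0, norm_sub_rev]; exact hdag2
    | succ n ih =>
      obtain ⟨ih1, ih2⟩ := ih
      have hd := hdesc n ih1
      have hgn := hgnn n
      have hc : 0 < 1 - 2*η₁ := by linarith
      have h1 : ‖xs (n+1) - xdag‖ ≤ ‖xs n - xdag‖ := by
        nlinarith [norm_nonneg (xs (n+1) - xdag), norm_nonneg (xs n - xdag)]
      refine ⟨?_, le_trans h1 ih2⟩
      rw [mem_closedBall_iff_norm]
      calc ‖xs (n+1) - x₀‖ = ‖(xs (n+1) - xdag) + (xdag - x₀)‖ := by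
            rw [sub_add_sub_cancel]
        _ ≤ ‖xs (n+1) - xdag‖ + ‖xdag - x₀‖ := norm_add_le _ _
        _ ≤ ρ/2 + ρ/2 := add_le_add (le_trans h1 ih2) hdag2
        _ = ρ := by ring
  have hmono1 : ∀ n, ‖xs (n+1) - xdag‖ ≤ ‖xs n - xdag‖ := by
    intro n
    have hd := hdesc n (hball n).1
    have hgn := hgnn n
    nlinarith [norm_nonneg (xs (n+1) - xdag), norm_nonneg (xs n - xdag)]
  have hE2anti : Antitone (fun n => ‖xs n - xdag‖^2) := by
    have h1 : Antitone (fun n => ‖xs n - xdag‖) :=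
      antitone_nat_of_succ_le hmono1
    exact fun a b hab => pow_le_pow_left₀ (norm_nonneg _) (h1 hab) 2
  -- summability
  have hsumg : Summable g := by
    have hc : 0 < 1 - 2*η₁ := by linarith
    have hpart : ∀ m, (1 - 2*η₁) * (∑ n ∈ Finset.range m, g n) + ‖xs m - xdag‖^2
        ≤ ‖xs 0 - xdag‖^2 := by
      intro m
      induction m with
      | zero => simp
      | succ m ih =>
        have hd := hdesc m (hball m).1
        rw [Finset.sum_range_succ]
        nlinarith
    refine summable_of_sum_range_le (c := ‖xs 0 - xdag‖^2 / (1 - 2*η₁)) (fun n => hgnn n) (fun m => ?_)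
    have h1 := hpart m
    have h2 : (0:ℝ) ≤ ‖xs m - xdag‖^2 := by positivity
    have h3 : (1 - 2*η₁) * (∑ n ∈ Finset.range m, g n) ≤ ‖xs 0 - xdag‖^2 := by
      linarith
    calc ∑ n ∈ Finset.range m, g n
        ≤ ‖xs 0 - xdag‖^2 / (1 - 2*η₁) := by
          rw [le_div_iff₀ hc]; linarith [h3]
      _ ≤ ‖xs 0 - xdag‖^2 / (1 - 2*η₁) := le_refl _
  have hTtend : Tendsto T atTop (nhds (∑' n, g n)) := by
    have := hsumg.hasSum.tendsto_sum_nat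
    convert this using 1
    funext m
    rw [hT]
  have hTmono : ∀ a b, a ≤ b → T a ≤ T b := by
    intro a b hab
    rw [hT, hT]
    exact Finset.sum_le_sum_of_subset_of_nonneg
      (Finset.range_subset_range.mpr hab) (fun n _ _ => hgnn n)
  have hIco : ∀ a b, a ≤ b → ∑ n ∈ Finset.Ico a b, g n = T b - T a := by
    intro a b hab
    rw [hT, hT, Finset.sum_Ico_eq_sub _ hab]
  -- regrouping over cycles
  have hgroup : ∀ (h : ℕ → ℝ) (a b : ℕ), a ≤ b →
      ∑ n ∈ Finset.Ico (a*N) (b*N), h n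
        = ∑ q ∈ Finset.Ico a b, ∑ j ∈ Finset.range N, h (q*N + j) := by
    intro h a b hab
    induction b, hab using Nat.le_induction with
    | base => simp
    | succ b hab ih =>
      have hb1 : a*N ≤ b*N := Nat.mul_le_mul_right _ hab
      have hb2 : b*N ≤ (b+1)*N := Nat.mul_le_mul_right _ (Nat.le_succ b)
      rw [Finset.sum_Ico_succ_top hab, ← ih,
        ← Finset.sum_Ico_consecutive _ hb1 hb2]
      congr 1
      have he : (b+1)*N = b*N + N := by ring
      rw [he, Finset.sum_Ico_eq_sum_range]
      simp
  have hRT : ∀ a b, a ≤ b → ∑ q ∈ Finset.Ico a b, R q = T (b*N) - T (a*N) := by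
    intro a b hab
    rw [← hIco _ _ (Nat.mul_le_mul_right _ hab), hgroup g a b hab]
    exact Finset.sum_congr rfl fun q _ => (hR q)
  have hD2 : ∀ q, D q ^ 2 ≤ N * R q := by
    intro q
    rw [hD, hR]
    have := sq_sum_le_card_mul_sum_sq
      (s := Finset.range N) (f := fun j => ‖r (q*N + j)‖)
    simp only [Finset.card_range] at this
    refine le_trans this ?_
    apply mul_le_mul_of_nonneg_left _ (Nat.cast_nonneg N)
    exact le_of_eq (Finset.sum_congr rfl fun j _ => (hg (q*N+j)).symm)
  -- cycle residual bound
  have hFcyc : ∀ (i : Fin N) (q : ℕ), ‖F i (xs (q*N)) - y i‖ ≤ 3 * D q := by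
    intro i q
    have hcast : ((q*N + i.val : ℕ) : Fin N) = i := by
      apply Fin.ext
      have he : q*N + i.val = i.val + q*N := by ring
      rw [Fin.val_natCast, he, Nat.add_mul_mod_self_right, Nat.mod_eq_of_lt i.isLt]
    have hrn : r (q*N + i.val) = F i (xs (q*N + i.val)) - y i := by
      rw [hr, hcast]
    have hler : ‖r (q*N + i.val)‖ ≤ D q := by
      rw [hD]
      exact Finset.single_le_sum (f := fun j => ‖r (q*N + j)‖)
        (fun j _ => norm_nonneg _) (Finset.mem_range.mpr i.isLt)
    have hxle : ‖xs (q*N) - xs (q*N + i.val)‖ ≤ D q := by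
      rw [htel _ _ (Nat.le_add_right _ _)]
      calc ‖∑ n ∈ Finset.Ico (q*N) (q*N + i.val), s n‖
          ≤ ∑ n ∈ Finset.Ico (q*N) (q*N + i.val), ‖s n‖ := norm_sum_le _ _
        _ ≤ ∑ n ∈ Finset.Ico (q*N) (q*N + i.val), ‖r n‖ :=
            Finset.sum_le_sum fun n _ => hsle n (hball n).1
        _ ≤ ∑ n ∈ Finset.Ico (q*N) (q*N + N), ‖r n‖ :=
            Finset.sum_le_sum_of_subset_of_nonneg
              (Finset.Ico_subset_Ico le_rfl (by omega)) (fun n _ _ => norm_nonneg _)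
        _ = D q := by
            rw [hD, Finset.sum_Ico_eq_sum_range]
            simp
    have hlip := hLip i (xs (q*N)) (hball _).1 (xs (q*N + i.val)) (hball _).1
    calc ‖F i (xs (q*N)) - y i‖
        = ‖(F i (xs (q*N)) - F i (xs (q*N + i.val))) + (F i (xs (q*N + i.val)) - y i)‖ := by
          rw [sub_add_sub_cancel]
      _ ≤ ‖F i (xs (q*N)) - F i (xs (q*N + i.val))‖ + ‖F i (xs (q*N + i.val)) - y i‖ :=
          norm_add_le _ _
      _ ≤ 2 * ‖xs (q*N) - xs (q*N + i.val)‖ + ‖r (q*N + i.val)‖ := by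
          rw [hrn]; exact add_le_add hlip le_rfl
      _ ≤ 2 * D q + D q := by
          refine add_le_add ?_ hler
          exact mul_le_mul_of_nonneg_left hxle (by norm_num)
      _ = 3 * D q := by ring
  -- pointwise inner-product bound
  have hpt : ∀ (k n : ℕ), |⟪s n, xs (k*N) - xdag⟫| ≤ 6 * g n + 3*N*R k := by
    intro k n
    have hn := (hball n).1
    have hkb := (hball (k*N)).1
    have h1 : ⟪s n, xs (k*N) - xdag⟫ = ⟪r n, F' (n : Fin N) (xs n) (xs (k*N) - xdag)⟫ := by
      rw [hs n]
      exact ContinuousLinearMap.adjoint_inner_left _ _ _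
    have hdecomp : F' (n : Fin N) (xs n) (xs (k*N) - xdag)
        = F' (n : Fin N) (xs n) (xs (k*N) - xs n) + F' (n : Fin N) (xs n) (xs n - xdag) := by
      rw [← map_add]
      congr 1
      abel
    have hb1 : ‖F' (n : Fin N) (xs n) (xs n - xdag)‖ ≤ (3/2) * ‖r n‖ := by
      have := hAtcc (n : Fin N) (xs n) hn xdag hdagball
      rw [hdagsol, ← hr n] at this
      exact this
    have hb2 : ‖F' (n : Fin N) (xs n) (xs (k*N) - xs n)‖
        ≤ (3/2) * (‖r n‖ + 3 * D k) := by
      have e1 : xs (k*N) - xs n = -(xs n - xs (k*N)) := by abel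
      rw [e1, map_neg, norm_neg]
      refine le_trans (hAtcc (n : Fin N) (xs n) hn (xs (k*N)) hkb) ?_
      have e2 : ‖F (n : Fin N) (xs n) - F (n : Fin N) (xs (k*N))‖
          ≤ ‖r n‖ + 3 * D k := by
        calc ‖F (n : Fin N) (xs n) - F (n : Fin N) (xs (k*N))‖
            = ‖(F (n : Fin N) (xs n) - y (n : Fin N))
                - (F (n : Fin N) (xs (k*N)) - y (n : Fin N))‖ := by
              congr 1; abel
          _ ≤ ‖F (n : Fin N) (xs n) - y (n : Fin N)‖
              + ‖F (n : Fin N) (xs (k*N)) - y (n : Fin N)‖ := norm_sub_le _ _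
          _ ≤ ‖r n‖ + 3 * D k := by
              rw [← hr n]
              exact add_le_add le_rfl (hFcyc _ k)
      linarith
    have hAw : ‖F' (n : Fin N) (xs n) (xs (k*N) - xdag)‖ ≤ 3 * ‖r n‖ + (9/2) * D k := by
      rw [hdecomp]
      refine le_trans (norm_add_le _ _) ?_
      linarith
    have habs : |⟪s n, xs (k*N) - xdag⟫| ≤ ‖r n‖ * (3 * ‖r n‖ + (9/2) * D k) := by
      rw [h1]
      refine le_trans (abs_real_inner_le_norm _ _) ?_
      exact mul_le_mul_of_nonneg_left hAw (norm_nonneg _)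
    refine le_trans habs ?_
    have hd2 := hD2 k
    have hdk := hDnn k
    have hrk := hRnn k
    have hrn2 := norm_nonneg (r n)
    have hNge : (1:ℝ) ≤ N := by exact_mod_cast hN1
    rw [hg n]
    nlinarith [sq_nonneg (‖r n‖ - D k)]
  -- Cauchy sequence
  have hE2cauchy : CauchySeq (fun n => ‖xs n - xdag‖^2) := by
    have hbdd : BddBelow (Set.range (fun n => ‖xs n - xdag‖^2)) := by
      refine ⟨0, ?_⟩
      rintro x ⟨n, rfl⟩
      positivity
    exact (tendsto_atTop_ciInf hE2anti hbdd).cauchySeq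
  have hcauchy : CauchySeq xs := by
    rw [Metric.cauchySeq_iff]
    intro ε hε
    have hNR : (0:ℝ) < N := by exact_mod_cast hN
    set C : ℝ := 6 + 3*(N:ℝ)^2 with hCdef
    have hC : 0 < C := by positivity
    set ε₁ : ℝ := min (ε^2/(64*N)) (ε^2/(64*(1+2*C))) with hε₁def
    have hε₁ : 0 < ε₁ := lt_min (by positivity) (by positivity)
    have hε₁a : (N:ℝ) * ε₁ ≤ ε^2/64 := by
      have h1 := min_le_left (ε^2/(64*N)) (ε^2/(64*(1+2*C)))
      have h2 : (N:ℝ) * (ε^2/(64*N)) = ε^2/64 := by field_simp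
      calc (N:ℝ) * ε₁ ≤ (N:ℝ) * (ε^2/(64*N)) :=
            mul_le_mul_of_nonneg_left h1 (le_of_lt hNR)
        _ = ε^2/64 := h2
    have hε₁b : (1+2*C) * ε₁ ≤ ε^2/64 := by
      have h1 := min_le_right (ε^2/(64*N)) (ε^2/(64*(1+2*C)))
      have h2 : (1+2*C) * (ε^2/(64*(1+2*C))) = ε^2/64 := by field_simp
      calc (1+2*C) * ε₁ ≤ (1+2*C) * (ε^2/(64*(1+2*C))) :=
            mul_le_mul_of_nonneg_left h1 (by linarith)
        _ = ε^2/64 := h2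
    obtain ⟨M₁, hM₁⟩ := Metric.cauchySeq_iff.mp hTtend.cauchySeq ε₁ hε₁
    obtain ⟨M₂, hM₂⟩ := Metric.cauchySeq_iff.mp hE2cauchy ε₁ hε₁
    set M := max M₁ M₂ with hMdef
    have hTd : ∀ a b : ℕ, M ≤ a → M ≤ b → a ≤ b → T b - T a < ε₁ := by
      intro a b ha hb hab
      have h1 := hM₁ b (le_trans (le_max_left _ _) hb) a (le_trans (le_max_left _ _) ha)
      rw [Real.dist_eq] at h1
      have h2 := abs_lt.mp h1
      linarith [h2.2]
    have hE2d : ∀ a b : ℕ, M ≤ a → M ≤ b →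
        |‖xs a - xdag‖^2 - ‖xs b - xdag‖^2| < ε₁ := by
      intro a b ha hb
      have h1 := hM₂ a (le_trans (le_max_right _ _) ha) b (le_trans (le_max_right _ _) hb)
      rw [Real.dist_eq] at h1
      exact h1
    have haN : ∀ a : ℕ, a ≤ a * N := fun a => Nat.le_mul_of_pos_right a hN
    -- cycle-level estimate
    have key : ∀ l m', M ≤ l → l ≤ m' → ‖xs (l*N) - xs (m'*N)‖ ≤ ε/4 := by
      intro l m' hMl hlm
      obtain ⟨k, hkmem, hkmin⟩ := Finset.exists_min_image (Finset.Icc l m') R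
        ⟨l, Finset.mem_Icc.mpr ⟨le_rfl, hlm⟩⟩
      obtain ⟨hlk, hkm⟩ := Finset.mem_Icc.mp hkmem
      have hMk : M ≤ k := le_trans hMl hlk
      have hmain : ∀ a b : ℕ, l ≤ a → a ≤ b → b ≤ m' →
          |⟪xs (a*N) - xs (b*N), xs (k*N) - xdag⟫| ≤ C * (T (b*N) - T (a*N)) := by
        intro a b hla hab hbm
        rw [htel _ _ (Nat.mul_le_mul_right _ hab), sum_inner]
        refine le_trans (Finset.abs_sum_le_sum_abs _ _) ?_
        have hptsum : ∀ n ∈ Finset.Ico (a*N) (b*N),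
            |⟪s n, xs (k*N) - xdag⟫| ≤ 6 * g n + 3*N*R (n / N) := by
          intro n hn
          obtain ⟨hn1, hn2⟩ := Finset.mem_Ico.mp hn
          have hq : n / N ∈ Finset.Icc l m' := by
            rw [Finset.mem_Icc]
            constructor
            · exact le_trans hla ((Nat.le_div_iff_mul_le hN).mpr hn1)
            · have hlt : n / N < b := (Nat.div_lt_iff_lt_mul hN).mpr hn2
              omega
          have hmin := hkmin _ hq
          refine le_trans (hpt k n) ?_
          have h3 : 3*(N:ℝ)*R k ≤ 3*N*R (n / N) := by
            apply mul_le_mul_of_nonneg_left hmin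
            positivity
          linarith
        refine le_trans (Finset.sum_le_sum hptsum) ?_
        rw [hgroup (fun n => 6 * g n + 3*N*R (n / N)) a b hab]
        have hinner : ∀ q ∈ Finset.Ico a b,
            (∑ j ∈ Finset.range N, (6 * g (q*N + j) + 3*N*R ((q*N + j) / N)))
              = C * R q := by
          intro q _
          have hdiv : ∀ j ∈ Finset.range N, (6 : ℝ) * g (q*N + j) + 3*N*R ((q*N + j) / N)
              = 6 * g (q*N + j) + 3*N*R q := by
            intro j hj
            rw [Finset.mem_range] at hj
            have he : q*N + j = j + q*N := by ring
            rw [he, Nat.add_mul_div_right _ _ hN, Nat.div_eq_of_lt hj, zero_add]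
          rw [Finset.sum_congr rfl hdiv, Finset.sum_add_distrib, Finset.sum_const,
            Finset.card_range, ← Finset.mul_sum, ← hR q, nsmul_eq_mul, hCdef]
          ring
        rw [Finset.sum_congr rfl hinner, ← Finset.mul_sum, hRT a b hab]
      have est : ∀ a : ℕ, l ≤ a → a ≤ m' → ‖xs (a*N) - xs (k*N)‖^2 ≤ (1+2*C)*ε₁ := by
        intro a hla ham
        have hMa : M ≤ a := le_trans hMl hla
        have hiden : ‖xs (a*N) - xs (k*N)‖^2
            = ‖xs (a*N) - xdag‖^2 - ‖xs (k*N) - xdag‖^2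
              + 2 * ⟪xs (k*N) - xs (a*N), xs (k*N) - xdag⟫ := by
          have e := norm_sub_sq_real (xs (a*N) - xdag) (xs (k*N) - xdag)
          have e2 : (xs (a*N) - xdag) - (xs (k*N) - xdag) = xs (a*N) - xs (k*N) := by
            abel
          rw [e2] at e
          have e3 : ⟪xs (k*N) - xs (a*N), xs (k*N) - xdag⟫
              = ⟪xs (k*N) - xdag, xs (k*N) - xdag⟫
                - ⟪xs (a*N) - xdag, xs (k*N) - xdag⟫ := by
            rw [← inner_sub_left]
            congr 1
            abel
          have e4 : ⟪xs (k*N) - xdag, xs (k*N) - xdag⟫ = ‖xs (k*N) - xdag‖^2 :=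
            real_inner_self_eq_norm_sq _
          rw [e, e3, e4]
          ring
        have hip : |⟪xs (k*N) - xs (a*N), xs (k*N) - xdag⟫| ≤ C * ε₁ := by
          rcases le_total a k with hak | hka
          · have h1 := hmain a k hla hak hkm
            have heq : xs (k*N) - xs (a*N) = -(xs (a*N) - xs (k*N)) := by abel
            rw [heq, inner_neg_left, abs_neg]
            refine le_trans h1 ?_
            have h2 := hTd (a*N) (k*N) (le_trans hMa (haN a)) (le_trans hMk (haN k))
              (Nat.mul_le_mul_right _ hak)
            nlinarith
          · have h1 := hmain k a hlk hka ham
            have heq : xs (k*N) - xs (a*N) = xs (k*N) - xs (a*N) := rfl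
            refine le_trans h1 ?_
            have h2 := hTd (k*N) (a*N) (le_trans hMk (haN k)) (le_trans hMa (haN a))
              (Nat.mul_le_mul_right _ hka)
            nlinarith
        have hE2 := hE2d (a*N) (k*N) (le_trans hMa (haN a)) (le_trans hMk (haN k))
        have h5 := abs_lt.mp hE2
        have h6 := abs_le.mp hip
        rw [hiden]
        linarith [h5.2, h6.2]
      have estl := est l le_rfl hlm
      have estm := est m' hlm le_rfl
      have hnl : ‖xs (l*N) - xs (k*N)‖ ≤ ε/8 := by
        nlinarith [norm_nonneg (xs (l*N) - xs (k*N)), hε₁b, hε]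
      have hnm : ‖xs (m'*N) - xs (k*N)‖ ≤ ε/8 := by
        nlinarith [norm_nonneg (xs (m'*N) - xs (k*N)), hε₁b, hε]
      calc ‖xs (l*N) - xs (m'*N)‖
          = ‖(xs (l*N) - xs (k*N)) + (xs (k*N) - xs (m'*N))‖ := by
            rw [sub_add_sub_cancel]
        _ ≤ ‖xs (l*N) - xs (k*N)‖ + ‖xs (k*N) - xs (m'*N)‖ := norm_add_le _ _
        _ ≤ ε/8 + ε/8 := by
            refine add_le_add hnl ?_
            rw [norm_sub_rev]
            exact hnm
        _ = ε/4 := by ring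
    -- within-cycle estimate
    have intra : ∀ n : ℕ, M*N ≤ n → ‖xs n - xs ((n/N)*N)‖ ≤ ε/4 := by
      intro n hn
      have hqM : M ≤ n / N := (Nat.le_div_iff_mul_le hN).mpr hn
      have h1 : (n/N)*N ≤ n := Nat.div_mul_le_self n N
      have hcard : n - (n/N)*N < N := by
        have h2 := Nat.mod_lt n hN
        have h5 := Nat.div_add_mod' n N
        rw [Nat.sub_lt_iff_lt_add h1]
        conv_lhs => rw [← h5]
        omega
      have hMn : M ≤ n := le_trans (le_trans (haN M) hn) le_rfl
      have hMq : M ≤ (n/N)*N := le_trans hqM (haN _)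
      have hsum : ‖∑ j ∈ Finset.Ico ((n/N)*N) n, s j‖
          ≤ ∑ j ∈ Finset.Ico ((n/N)*N) n, ‖r j‖ := by
        refine le_trans (norm_sum_le _ _) ?_
        exact Finset.sum_le_sum fun j _ => hsle j (hball j).1
      have hcs : (∑ j ∈ Finset.Ico ((n/N)*N) n, ‖r j‖)^2
          ≤ (N:ℝ) * (T n - T ((n/N)*N)) := by
        have h4 := sq_sum_le_card_mul_sum_sq
          (s := Finset.Ico ((n/N)*N) n) (f := fun j => ‖r j‖)
        rw [Nat.card_Ico] at h4
        have h5 : (∑ j ∈ Finset.Ico ((n/N)*N) n, ‖r j‖^2)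
            = T n - T ((n/N)*N) := by
          rw [← hIco _ _ h1]
          exact Finset.sum_congr rfl fun j _ => (hg j).symm
        rw [h5] at h4
        refine le_trans h4 ?_
        apply mul_le_mul_of_nonneg_right
        · exact_mod_cast le_of_lt hcard
        · have h6 := hIco _ _ h1
          have h7 : (0:ℝ) ≤ ∑ j ∈ Finset.Ico ((n/N)*N) n, g j :=
            Finset.sum_nonneg fun j _ => hgnn j
          linarith
      have hTn := hTd ((n/N)*N) n hMq hMn h1
      have h8 : ‖xs n - xs ((n/N)*N)‖^2 ≤ (N:ℝ) * ε₁ := by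
        rw [norm_sub_rev, htel _ _ h1]
        have h9 : (0:ℝ) ≤ ∑ j ∈ Finset.Ico ((n/N)*N) n, ‖r j‖ :=
          Finset.sum_nonneg fun j _ => norm_nonneg _
        nlinarith [norm_nonneg (∑ j ∈ Finset.Ico ((n/N)*N) n, s j)]
      nlinarith [norm_nonneg (xs n - xs ((n/N)*N)), hε₁a, hε]
    refine ⟨M*N, fun n1 hn1 n2 hn2 => ?_⟩
    have hq1 : M ≤ n1 / N := (Nat.le_div_iff_mul_le hN).mpr hn1
    have hq2 : M ≤ n2 / N := (Nat.le_div_iff_mul_le hN).mpr hn2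
    have hmid : ‖xs ((n1/N)*N) - xs ((n2/N)*N)‖ ≤ ε/4 := by
      rcases le_total (n1/N) (n2/N) with h | h
      · exact key _ _ hq1 h
      · rw [norm_sub_rev]
        exact key _ _ hq2 h
    rw [dist_eq_norm]
    calc ‖xs n1 - xs n2‖
        = ‖(xs n1 - xs ((n1/N)*N)) + ((xs ((n1/N)*N) - xs ((n2/N)*N))
            + (xs ((n2/N)*N) - xs n2))‖ := by
          rw [sub_add_sub_cancel, sub_add_sub_cancel]
      _ ≤ ‖xs n1 - xs ((n1/N)*N)‖ + (‖xs ((n1/N)*N) - xs ((n2/N)*N)‖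
            + ‖xs ((n2/N)*N) - xs n2‖) :=
          le_trans (norm_add_le _ _) (by
            exact add_le_add le_rfl (norm_add_le _ _))
      _ ≤ ε/4 + (ε/4 + ε/4) := by
          refine add_le_add (intra n1 hn1) (add_le_add hmid ?_)
          rw [norm_sub_rev]
          exact intra n2 hn2
      _ < ε := by linarith
  obtain ⟨xl, hxl⟩ := cauchySeq_tendsto_of_complete hcauchy
  have hxlball : xl ∈ closedBall x₀ ρ :=
    isClosed_closedBall.mem_of_tendsto hxl (Eventually.of_forall fun n => (hball n).1)
  have hrlim : Tendsto (fun n => ‖r n‖) atTop (nhds 0) := by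
    have h1 : Tendsto g atTop (nhds 0) := hsumg.tendsto_atTop_zero
    have h2 : Tendsto (fun n => Real.sqrt (g n)) atTop (nhds (Real.sqrt 0)) :=
      (Real.continuous_sqrt.tendsto 0).comp h1
    rw [Real.sqrt_zero] at h2
    convert h2 using 2 with n
    rw [hg n, Real.sqrt_sq (norm_nonneg _)]
  have hxlsol : ∀ i, F i xl = y i := by
    intro i
    rw [← sub_eq_zero, ← norm_eq_zero]
    have hmono_idx : Tendsto (fun n : ℕ => n*N + i.val) atTop atTop :=
      tendsto_atTop_mono (fun n => by
        calc n ≤ n * N := Nat.le_mul_of_pos_right n hN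
        _ ≤ n * N + i.val := Nat.le_add_right _ _) tendsto_id
    have hxsub : Tendsto (fun n : ℕ => xs (n*N + i.val)) atTop (nhds xl) :=
      hxl.comp hmono_idx
    have hrsub : Tendsto (fun n : ℕ => ‖r (n*N + i.val)‖) atTop (nhds 0) :=
      hrlim.comp hmono_idx
    have hbound : ∀ n : ℕ, ‖F i xl - y i‖
        ≤ 2 * ‖xl - xs (n*N + i.val)‖ + ‖r (n*N + i.val)‖ := by
      intro n
      have hcast : ((n*N + i.val : ℕ) : Fin N) = i := by
        apply Fin.ext
        have he : n*N + i.val = i.val + n*N := by ring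
        rw [Fin.val_natCast, he, Nat.add_mul_mod_self_right, Nat.mod_eq_of_lt i.isLt]
      have hrn : r (n*N + i.val) = F i (xs (n*N + i.val)) - y i := by rw [hr, hcast]
      have hlip := hLip i xl hxlball (xs (n*N + i.val)) (hball _).1
      calc ‖F i xl - y i‖
          = ‖(F i xl - F i (xs (n*N + i.val))) + (F i (xs (n*N + i.val)) - y i)‖ := by
            rw [sub_add_sub_cancel]
        _ ≤ ‖F i xl - F i (xs (n*N + i.val))‖ + ‖F i (xs (n*N + i.val)) - y i‖ :=
            norm_add_le _ _
        _ ≤ 2 * ‖xl - xs (n*N + i.val)‖ + ‖r (n*N + i.val)‖ := by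
            rw [hrn]; exact add_le_add hlip le_rfl
    have hlim0 : Tendsto (fun n : ℕ => 2 * ‖xl - xs (n*N + i.val)‖ + ‖r (n*N + i.val)‖)
        atTop (nhds 0) := by
      have h1 : Tendsto (fun n : ℕ => ‖xl - xs (n*N + i.val)‖) atTop (nhds 0) := by
        have h2 := tendsto_iff_norm_sub_tendsto_zero.mp hxsub
        refine h2.congr (fun n => ?_)
        rw [norm_sub_rev]
      have h3 := (h1.const_mul 2).add hrsub
      simpa using h3
    have := ge_of_tendsto hlim0 (Eventually.of_forall hbound)
    exact le_antisymm this (norm_nonneg _)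
  have hker2 : ∀ i : Fin N, F' i xdag (xdag - xl) = 0 := by
    intro i
    have h1 := htcc1 i xdag hdagball xl hxlball
    rw [hdagsol, hxlsol, sub_self] at h1
    simp only [norm_zero, mul_zero, zero_sub, norm_neg] at h1
    exact norm_le_zero_iff.mp h1
  have hperp : ⟪xl - x₀, xdag - xl⟫ = 0 := by
    have hv : ∀ n : ℕ, F' (n : Fin N) (xs n) (xdag - xl) = 0 := by
      intro n
      have hk := hkern (n : Fin N) (xs n) (hball n).1
      have hmem : xdag - xl ∈ LinearMap.ker (F' (n : Fin N) xdag : X →ₗ[ℝ] Y) :=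
        LinearMap.mem_ker.mpr (hker2 _)
      exact LinearMap.mem_ker.mp (hk hmem)
    have hstep2 : ∀ n : ℕ, ⟪xs n - x₀, xdag - xl⟫ = 0 := by
      intro n
      induction n with
      | zero => rw [hxs0, sub_self, inner_zero_left]
      | succ n ih =>
        have h1 : xs (n+1) - x₀ = (xs n - x₀) - s n := by rw [hstep]; abel
        rw [h1, inner_sub_left, ih]
        have h2 : ⟪s n, xdag - xl⟫ = 0 := by
          rw [hs n, ContinuousLinearMap.adjoint_inner_left, hv n, inner_zero_right]
        rw [h2]
        ring
    have hlim : Tendsto (fun n => ⟪xs n - x₀, xdag - xl⟫) atTop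
        (nhds ⟪xl - x₀, xdag - xl⟫) :=
      Tendsto.inner (hxl.sub tendsto_const_nhds) tendsto_const_nhds
    have : Tendsto (fun _ : ℕ => (0:ℝ)) atTop (nhds ⟪xl - x₀, xdag - xl⟫) :=
      hlim.congr (fun n => hstep2 n)
    exact tendsto_nhds_unique this tendsto_const_nhds
  have hfinal : xl = xdag := by
    have h1 : ‖xdag - x₀‖^2 = ‖xdag - xl‖^2 + ‖xl - x₀‖^2 := by
      have he : xdag - x₀ = (xdag - xl) + (xl - x₀) := by abel
      rw [he, norm_add_sq_real]
      rw [real_inner_comm] at hperp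
      rw [hperp]
      ring
    have h2 := hdagmin xl hxlball hxlsol
    have h3 : ‖xdag - xl‖^2 ≤ 0 := by
      nlinarith [norm_nonneg (xdag - x₀), norm_nonneg (xl - x₀)]
    have h4 : xdag - xl = 0 := by
      rw [← norm_eq_zero]
      nlinarith [norm_nonneg (xdag - xl)]
    have h5 : xl - xdag = -(xdag - xl) := by abel
    rw [← sub_eq_zero, h5, h4, neg_zero]
  rwa [hfinal] at hxl
end

section
/- Assume the system F_i(x) = y^i has a solution in B_{ρ/2}(x_0), let x† be its unique solution of minimal distance to x_0, and assume the null-space condition N(F_i'(x†)) ⊆ N(F_i'(x)) for all x ∈ B_ρ(x_0) and all i. Then the eLK iterates with exact data (y^{δ,i} = y^i, δ^i = 0) converge in X^N to the constant vector (x†, …, x†). -/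
open Metric Filter RealInnerProductSpace

/-- The ℓ² product of complete spaces is complete (the `PiLp` uniform structure
is definitionally the product uniform structure). -/
instance piLp_completeSpace {ι : Type*} (p : ENNReal) (α : ι → Type*)
    [∀ i, UniformSpace (α i)] [∀ i, CompleteSpace (α i)] :
    CompleteSpace (PiLp p α) :=
  (PiLp.uniformEquiv p α).completeSpace_iff.2 inferInstance

lemma eLK.le_of_sq_le_sq {a b : ℝ} (hb : 0 ≤ b) (h : a^2 ≤ b^2) (ha : 0 ≤ a) : a ≤ b := by
  nlinarith

lemma eLK.piLp_norm_apply_le {ι : Type*} [Fintype ι] {α : ι → Type*}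
    [∀ i, SeminormedAddCommGroup (α i)] (w : PiLp 2 α) (i : ι) : ‖w i‖ ≤ ‖w‖ := by
  refine eLK.le_of_sq_le_sq (norm_nonneg _) ?_ (norm_nonneg _)
  rw [PiLp.norm_sq_eq_of_L2]
  exact Finset.single_le_sum (f := fun i => ‖w i‖^2) (fun j _ => by positivity)
    (Finset.mem_univ i)

open ContinuousLinearMap in
lemma eLK.landweber_decrease {H H₂ : Type*} [NormedAddCommGroup H] [InnerProductSpace ℝ H]
    [CompleteSpace H] [NormedAddCommGroup H₂] [InnerProductSpace ℝ H₂] [CompleteSpace H₂]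
    (A : H →L[ℝ] H₂) (hA : ‖A‖ ≤ 1) (e : H) (r : H₂) (η : ℝ)
    (h : ‖A e - r‖ ≤ η * ‖r‖) :
    ‖e - ContinuousLinearMap.adjoint A r‖^2 ≤ ‖e‖^2 - (1 - 2*η) * ‖r‖^2 := by
  have h1 : ‖e - adjoint A r‖^2 = ‖e‖^2 - 2*⟪e, adjoint A r⟫ + ‖adjoint A r‖^2 :=
    norm_sub_sq_real e _
  have h2 : ⟪e, adjoint A r⟫ = ⟪A e, r⟫ := adjoint_inner_right A e r
  have h3 : ⟪A e, r⟫ = ‖r‖^2 + ⟪A e - r, r⟫ := by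
    rw [inner_sub_left, real_inner_self_eq_norm_sq]; ring
  have h4 : |⟪A e - r, r⟫| ≤ η * ‖r‖ * ‖r‖ :=
    (abs_real_inner_le_norm _ _).trans
      (mul_le_mul_of_nonneg_right h (norm_nonneg r))
  have h5 : ‖adjoint A r‖ ≤ ‖r‖ := by
    calc ‖adjoint A r‖ ≤ ‖adjoint A‖ * ‖r‖ := le_opNorm _ _
    _ ≤ 1 * ‖r‖ := by
        rw [adjoint.norm_map]; exact mul_le_mul_of_nonneg_right hA (norm_nonneg _)
    _ = ‖r‖ := one_mul _
  have h6 := abs_le.1 h4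
  have h7 : ‖adjoint A r‖^2 ≤ ‖r‖^2 := by
    nlinarith [norm_nonneg (adjoint A r), norm_nonneg r]
  nlinarith

set_option maxHeartbeats 8000000 in
/-- **Convergence of the embedded Landweber–Kaczmarz method for exact data to the
constant vector built from the minimal-distance solution `x†`, under the
null-space condition.** -/
theorem embedded_landweber_kaczmarz_exact_data_convergence_minimal_distance
    {X Y : Type*} [NormedAddCommGroup X] [InnerProductSpace ℝ X] [CompleteSpace X]
    [NormedAddCommGroup Y] [InnerProductSpace ℝ Y] [CompleteSpace Y]
    {N : ℕ} [NeZero N]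
    (F : Fin N → X → Y) (F' : Fin N → X → X →L[ℝ] Y)
    (x₀ : X) (ρ : ℝ) (hρ : 0 < ρ)
    (hdiff : ∀ i, ∀ z ∈ closedBall x₀ ρ, HasFDerivAt (F i) (F' i z) z)
    (hscal : ∀ i, ∀ z ∈ closedBall x₀ ρ, ‖F' i z‖ ≤ 1)
    (η : ℝ) (hη : η < 1 / 2)
    (htcc : ∀ i, ∀ z ∈ closedBall x₀ ρ, ∀ z' ∈ closedBall x₀ ρ,
      ‖F i z - F i z' - F' i z (z - z')‖ ≤ η * ‖F i z - F i z'‖)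
    (bF : PiLp 2 (fun _ : Fin N => X) → PiLp 2 (fun _ : Fin N => Y))
    (hbF : ∀ (v : PiLp 2 (fun _ : Fin N => X)) (i : Fin N), bF v i = F i (v i))
    (bF' : PiLp 2 (fun _ : Fin N => X) →
      (PiLp 2 (fun _ : Fin N => X) →L[ℝ] PiLp 2 (fun _ : Fin N => Y)))
    (hbF' : ∀ (v h : PiLp 2 (fun _ : Fin N => X)) (i : Fin N),
      bF' v h i = F' i (v i) (h i))
    (D : PiLp 2 (fun _ : Fin N => X) →L[ℝ] PiLp 2 (fun _ : Fin N => X))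
    (hD : ∀ (v : PiLp 2 (fun _ : Fin N => X)) (i : Fin N), D v i = v (i + 1) - v i)
    (lam : ℝ) (hlam : 0 < lam) (hlamD : ‖lam • D‖ ≤ 1)
    (G : PiLp 2 (fun _ : Fin N => X) →L[ℝ] PiLp 2 (fun _ : Fin N => X))
    (hG : G = (lam ^ 2) • ((ContinuousLinearMap.adjoint D).comp D))
    (ε : ℝ → ℝ) (hεmono : StrictMonoOn ε (Set.Ici 0))
    (hεnonneg : ∀ t, 0 ≤ t → 0 ≤ ε t)
    (hεlim : Tendsto ε (nhdsWithin 0 (Set.Ioi 0)) (nhds 0))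
    (τ : ℝ) (hτ : 2 * (1 + η) / (1 - 2 * η) < τ)
    (y : Fin N → Y)
    (hex : ∃ z ∈ closedBall x₀ (ρ / 2), ∀ i, F i z = y i)
    (xdag : X) (hdagsol : ∀ i, F i xdag = y i)
    (hdagmin : ∀ z ∈ closedBall x₀ ρ, (∀ i, F i z = y i) → ‖xdag - x₀‖ ≤ ‖z - x₀‖)
    (hdaguniq : ∀ z ∈ closedBall x₀ ρ, (∀ i, F i z = y i) →
      ‖z - x₀‖ = ‖xdag - x₀‖ → z = xdag)
    (hkern : ∀ i, ∀ z ∈ closedBall x₀ ρ,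
      LinearMap.ker (F' i xdag : X →ₗ[ℝ] Y) ≤ LinearMap.ker (F' i z : X →ₗ[ℝ] Y))
    (ybar : PiLp 2 (fun _ : Fin N => Y)) (hybar : ∀ i, ybar i = y i)
    (bxs bxh : ℕ → PiLp 2 (fun _ : Fin N => X))
    (hbxs0 : ∀ i, bxs 0 i = x₀)
    (hhalf : ∀ n, bxh n = bxs n -
      (if 0 < ‖bF (bxs n) - ybar‖ then (1 : ℝ) else 0) •
        (ContinuousLinearMap.adjoint (bF' (bxs n))) (bF (bxs n) - ybar))
    (hfull : ∀ n, bxs (n + 1) = bxh n -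
      (if τ * ε 0 < ‖G (bxh n)‖ then (1 : ℝ) else 0) • G (bxh n))
    : Tendsto bxs atTop
        (nhds (WithLp.toLp 2 (fun _ => xdag) : PiLp 2 (fun _ : Fin N => X))) := by
  classical
  -- trivial case of a subsingleton space
  by_cases hXtriv : Subsingleton X
  · haveI : Subsingleton (PiLp 2 fun _ : Fin N => X) :=
      ⟨fun a b => PiLp.ext fun _ => Subsingleton.elim _ _⟩
    have hconst : bxs = fun _ => (WithLp.toLp 2 (fun _ => xdag) : PiLp 2 (fun _ : Fin N => X)) :=
      funext fun n => Subsingleton.elim _ _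
    rw [hconst]; exact tendsto_const_nhds
  haveI : Nontrivial X := not_subsingleton_iff_nontrivial.1 hXtriv
  -- ε 0 = 0
  have hε0 : ε 0 = 0 := by
    refine le_antisymm ?_ (hεnonneg 0 le_rfl)
    refine ge_of_tendsto hεlim ?_
    filter_upwards [self_mem_nhdsWithin] with t ht
    exact (hεmono Set.self_mem_Ici (Set.mem_Ici.mpr (le_of_lt ht)) ht).le
  -- iteration simplification
  have hstep1 : ∀ n, bxh n = bxs n -
      (ContinuousLinearMap.adjoint (bF' (bxs n))) (bF (bxs n) - ybar) := by
    intro n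
    rw [hhalf n]
    split_ifs with h
    · rw [one_smul]
    · push_neg at h
      have h0 : bF (bxs n) - ybar = 0 := by
        have := le_antisymm h (norm_nonneg _)
        rwa [norm_eq_zero] at this
      rw [h0, map_zero, smul_zero]
  have hstep2 : ∀ n, bxs (n+1) = bxh n - G (bxh n) := by
    intro n
    rw [hfull n, hε0, mul_zero]
    split_ifs with h
    · rw [one_smul]
    · push_neg at h
      have h0 : G (bxh n) = 0 := by
        have := le_antisymm h (norm_nonneg _)
        rwa [norm_eq_zero] at this
      rw [h0, smul_zero]
  -- minimal-norm solution basics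
  have hxdmem : xdag ∈ closedBall x₀ ρ ∧ ‖xdag - x₀‖ ≤ ρ / 2 := by
    obtain ⟨z, hz, hzsol⟩ := hex
    have hz' : z ∈ closedBall x₀ ρ := closedBall_subset_closedBall (by linarith) hz
    have h1 : ‖xdag - x₀‖ ≤ ρ / 2 :=
      (hdagmin z hz' hzsol).trans (by rwa [mem_closedBall_iff_norm] at hz)
    exact ⟨mem_closedBall_iff_norm.mpr (h1.trans (by linarith)), h1⟩
  obtain ⟨hxdball, hr₀⟩ := hxdmem
  have hballmem : ∀ z : X, ‖z - xdag‖ ≤ ρ/2 → z ∈ closedBall x₀ ρ := by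
    intro z hz
    rw [mem_closedBall_iff_norm]
    calc ‖z - x₀‖ = ‖(z - xdag) + (xdag - x₀)‖ := by rw [sub_add_sub_cancel]
    _ ≤ ‖z - xdag‖ + ‖xdag - x₀‖ := norm_add_le _ _
    _ ≤ ρ := by linarith
  -- modified tangential cone constant
  set η' : ℝ := max η 0 with hη'def
  have hη'0 : 0 ≤ η' := le_max_right _ _
  have hη'lt : η' < 1/2 := max_lt hη (by norm_num)
  have htcc' : ∀ i, ∀ z ∈ closedBall x₀ ρ, ∀ z' ∈ closedBall x₀ ρ,
      ‖F i z - F i z' - F' i z (z - z')‖ ≤ η' * ‖F i z - F i z'‖ :=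
    fun i z hz z' hz' => (htcc i z hz z' hz').trans
      (mul_le_mul_of_nonneg_right (le_max_left _ _) (norm_nonneg _))
  clear_value η'
  -- norm facts for D
  have hDnorm : ∀ v : PiLp 2 (fun _ : Fin N => X), lam * ‖D v‖ ≤ ‖v‖ := by
    intro v
    have h1 : ‖(lam • D) v‖ ≤ ‖lam • D‖ * ‖v‖ := (lam • D).le_opNorm v
    have h2 : ‖(lam • D) v‖ = lam * ‖D v‖ := by
      rw [ContinuousLinearMap.smul_apply, norm_smul, Real.norm_eq_abs, abs_of_pos hlam]
    nlinarith [norm_nonneg v, mul_le_mul_of_nonneg_right hlamD (norm_nonneg v)]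
  -- adjoint component formulas
  have hadjD : ∀ w : PiLp 2 (fun _ : Fin N => X), ContinuousLinearMap.adjoint D w
      = (WithLp.toLp 2 (fun i => w (i - 1) - w i) : PiLp 2 (fun _ : Fin N => X)) := by
    intro w
    apply ext_inner_right ℝ
    intro z
    rw [ContinuousLinearMap.adjoint_inner_left, PiLp.inner_apply, PiLp.inner_apply]
    have h1 : ∀ i : Fin N, ⟪w i, D z i⟫ = ⟪w i, z (i+1)⟫ - ⟪w i, z i⟫ := by
      intro i; rw [hD, inner_sub_right]
    have h2 : ∀ i : Fin N,
        ⟪((WithLp.toLp 2 (fun i => w (i - 1) - w i) : PiLp 2 (fun _ : Fin N => X))) i, z i⟫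
          = ⟪w (i-1), z i⟫ - ⟪w i, z i⟫ := by
      intro i; rw [inner_sub_left]
    simp only [h1, h2, Finset.sum_sub_distrib]
    congr 1
    exact Fintype.sum_equiv (Equiv.addRight (1 : Fin N)) _ _
      (fun i => by
        simp only [Equiv.coe_addRight]
        rw [add_sub_cancel_right])
  have hadjF' : ∀ (v : PiLp 2 (fun _ : Fin N => X)) (u : PiLp 2 (fun _ : Fin N => Y)),
      ContinuousLinearMap.adjoint (bF' v) u
        = (WithLp.toLp 2 (fun i => ContinuousLinearMap.adjoint (F' i (v i)) (u i)) :
            PiLp 2 (fun _ : Fin N => X)) := by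
    intro v u
    apply ext_inner_right ℝ
    intro z
    rw [ContinuousLinearMap.adjoint_inner_left, PiLp.inner_apply, PiLp.inner_apply]
    refine Finset.sum_congr rfl fun i _ => ?_
    rw [hbF' v z i, ContinuousLinearMap.adjoint_inner_left]
  -- G formulas
  have hGapp : ∀ v, G v = (lam^2) • (ContinuousLinearMap.adjoint D) (D v) := by
    intro v; rw [hG]; rfl
  have hDconst : ∀ c : X, D (WithLp.toLp 2 (fun _ => c) : PiLp 2 (fun _ : Fin N => X)) = 0 := by
    intro c
    ext i
    rw [hD]
    exact sub_self c
  have hGcomp : ∀ (v : PiLp 2 (fun _ : Fin N => X)) (i : Fin N),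
      G v i = lam^2 • ((v i - v (i-1)) - (v (i+1) - v i)) := by
    intro v i
    rw [hGapp]
    have h1 : ((lam^2) • (ContinuousLinearMap.adjoint D) (D v)) i
        = lam^2 • ((ContinuousLinearMap.adjoint D) (D v) i) := rfl
    have h2 : (ContinuousLinearMap.adjoint D) (D v) i = (D v) (i - 1) - (D v) i :=
      by rw [hadjD]
    rw [h1, h2, hD v (i-1), hD v i, sub_add_cancel]
  have hadjDlam : ∀ w : PiLp 2 (fun _ : Fin N => X),
      lam * ‖ContinuousLinearMap.adjoint D w‖ ≤ ‖w‖ := by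
    intro w
    have heq : ContinuousLinearMap.adjoint (lam • D) w
        = lam • ContinuousLinearMap.adjoint D w := by
      apply ext_inner_right ℝ
      intro z
      rw [ContinuousLinearMap.adjoint_inner_left, real_inner_smul_left,
        ContinuousLinearMap.adjoint_inner_left, ContinuousLinearMap.smul_apply,
        real_inner_smul_right]
    have h1 : ‖ContinuousLinearMap.adjoint (lam • D) w‖
        ≤ ‖ContinuousLinearMap.adjoint (lam • D)‖ * ‖w‖ := ContinuousLinearMap.le_opNorm _ _
    rw [ContinuousLinearMap.adjoint.norm_map, heq, norm_smul, Real.norm_eq_abs,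
      abs_of_pos hlam] at h1
    nlinarith [norm_nonneg w, mul_le_mul_of_nonneg_right hlamD (norm_nonneg w)]
  -- dichotomy : N = 1 (where D = 0) or 2 ≤ N (where 2 lam^2 ≤ 1)
  have hN1 : 1 ≤ N := Nat.one_le_iff_ne_zero.mpr (NeZero.ne N)
  have hGbound : ∀ (v : PiLp 2 (fun _ : Fin N => X)) (c : X) (R : ℝ),
      (∀ i, ‖v i - c‖ ≤ R) → ∀ i, ‖(v - G v) i - c‖ ≤ R := by
    rcases eq_or_lt_of_le hN1 with hN | hN
    · -- N = 1
      intro v c R hR i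
      have hDv : D v = 0 := by
        haveI hsing : Subsingleton (Fin N) := by rw [← hN]; infer_instance
        ext j
        rw [hD, Subsingleton.elim (j+1) j, sub_self]
        rfl
      have hGv : G v = 0 := by rw [hGapp, hDv, map_zero, smul_zero]
      have : (v - G v) i - c = v i - c := by rw [hGv, sub_zero]
      rw [this]
      exact hR i
    · -- 2 ≤ N
      have hN2 : 2 ≤ N := hN
      have h10 : (1 : Fin N) ≠ 0 := by
        intro hc
        have h := congrArg Fin.val hc
        rw [Fin.val_one', Fin.val_zero, Nat.mod_eq_of_lt (by omega)] at h
        omega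
      have hm10 : (-1 : Fin N) ≠ 0 := by
        intro hc
        rw [neg_eq_zero] at hc
        exact h10 hc
      obtain ⟨x1, hx1⟩ := exists_ne (0 : X)
      set u : X := ‖x1‖⁻¹ • x1 with hudef
      have hu : ‖u‖ = 1 := norm_smul_inv_norm hx1
      set v0 : PiLp 2 (fun _ : Fin N => X) := WithLp.toLp 2 (fun j => if j = 0 then u else 0) with hv0def
      have hv0i : ∀ j : Fin N, v0 j = if j = 0 then u else 0 := fun j => rfl
      have hvnorm : ‖v0‖^2 = 1 := by
        rw [PiLp.norm_sq_eq_of_L2]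
        have h : ∀ j : Fin N, ‖v0 j‖^2 = if j = 0 then (1:ℝ) else 0 := by
          intro j; rw [hv0i]; by_cases hj : j = 0 <;> simp [hj, hu]
        simp [h]
      have hDv : ‖D v0‖^2 = 2 := by
        rw [PiLp.norm_sq_eq_of_L2]
        have h : ∀ j : Fin N, ‖D v0 j‖^2
            = (if j = 0 then (1:ℝ) else 0) + (if j = -1 then (1:ℝ) else 0) := by
          intro j
          rw [hD, hv0i, hv0i]
          by_cases hj0 : j = 0
          · subst hj0
            have e2 : (0:Fin N) ≠ -1 := Ne.symm hm10
            simp [show N ≠ 1 by omega, e2, hu]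
          · by_cases hj1 : j = -1
            · subst hj1
              have e1 : (-1:Fin N) + 1 = 0 := neg_add_cancel 1
              simp [e1, hm10, hu]
            · have e1 : j + 1 ≠ 0 := fun h => hj1 (eq_neg_of_add_eq_zero_left h)
              simp [e1, hj0, hj1]
        simp [h, Finset.sum_add_distrib]
        norm_num
      have h2l : 2 * lam^2 ≤ 1 := by
        nlinarith [hDnorm v0, hvnorm, hDv, norm_nonneg (D v0), norm_nonneg v0,
          mul_nonneg hlam.le (norm_nonneg (D v0))]
      intro v c R hR i
      have hR0 : 0 ≤ R := (norm_nonneg _).trans (hR i)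
      have hid : (v - G v) i - c
          = (1 - 2*lam^2) • (v i - c) + lam^2 • (v (i-1) - c) + lam^2 • (v (i+1) - c) := by
        have h1 : (v - G v) i = v i - G v i := rfl
        rw [h1, hGcomp]
        module
      rw [hid]
      have c1 : 0 ≤ 1 - 2*lam^2 := by linarith
      have c2 : (0:ℝ) ≤ lam^2 := sq_nonneg lam
      calc ‖(1 - 2*lam^2) • (v i - c) + lam^2 • (v (i-1) - c) + lam^2 • (v (i+1) - c)‖
          ≤ ‖(1 - 2*lam^2) • (v i - c) + lam^2 • (v (i-1) - c)‖ + ‖lam^2 • (v (i+1) - c)‖ :=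
            norm_add_le _ _
      _ ≤ ‖(1 - 2*lam^2) • (v i - c)‖ + ‖lam^2 • (v (i-1) - c)‖ + ‖lam^2 • (v (i+1) - c)‖ :=
            add_le_add_left (norm_add_le _ _) _
      _ = (1 - 2*lam^2) * ‖v i - c‖ + lam^2 * ‖v (i-1) - c‖ + lam^2 * ‖v (i+1) - c‖ := by
            simp only [norm_smul, Real.norm_eq_abs]
            rw [abs_of_nonneg c1, abs_of_nonneg c2]
      _ ≤ (1 - 2*lam^2) * R + lam^2 * R + lam^2 * R := by
            have := hR i; have := hR (i-1); have := hR (i+1)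
            gcongr <;> assumption
      _ = R := by ring
  -- component formula for the half step
  have hcomp_r : ∀ n (i : Fin N), (bF (bxs n) - ybar) i = F i (bxs n i) - y i := by
    intro n i
    have h1 : (bF (bxs n) - ybar) i = bF (bxs n) i - ybar i := rfl
    rw [h1, hbF, hybar]
  have hxh_comp : ∀ n (i : Fin N), bxh n i = bxs n i -
      (ContinuousLinearMap.adjoint (F' i (bxs n i))) (F i (bxs n i) - y i) := by
    intro n i
    have h1 : bxh n i = bxs n i
        - (ContinuousLinearMap.adjoint (bF' (bxs n))) (bF (bxs n) - ybar) i := by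
      rw [hstep1 n]; rfl
    rw [h1, hadjF']
    exact congrArg (fun t => bxs n i - ContinuousLinearMap.adjoint (F' i (bxs n i)) t) (hcomp_r n i)
  -- componentwise Landweber monotonicity
  have hcompmono : ∀ z : X, z ∈ closedBall x₀ ρ → ∀ i,
      ‖(z - (ContinuousLinearMap.adjoint (F' i z)) (F i z - y i)) - xdag‖ ≤ ‖z - xdag‖ := by
    intro z hz i
    have htc := htcc' i z hz xdag hxdball
    rw [hdagsol i] at htc
    have hAe1 : ‖(F' i z) (z - xdag) - (F i z - y i)‖ ≤ η' * ‖F i z - y i‖ := by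
      calc ‖(F' i z) (z - xdag) - (F i z - y i)‖
          = ‖F i z - y i - (F' i z) (z - xdag)‖ := norm_sub_rev _ _
      _ ≤ η' * ‖F i z - y i‖ := htc
    have hdec := eLK.landweber_decrease (F' i z) (hscal i z hz) (z - xdag)
      (F i z - y i) η' hAe1
    have h2 : z - xdag - (ContinuousLinearMap.adjoint (F' i z)) (F i z - y i)
        = (z - (ContinuousLinearMap.adjoint (F' i z)) (F i z - y i)) - xdag :=
      sub_right_comm _ _ _
    rw [h2] at hdec
    refine eLK.le_of_sq_le_sq (norm_nonneg _) ?_ (norm_nonneg _)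
    nlinarith [norm_nonneg (F i z - y i), sq_nonneg ‖F i z - y i‖, hη'lt]
  -- ball invariance
  have hballh_of : ∀ n, (∀ i, ‖bxs n i - xdag‖ ≤ ρ/2) → (∀ i, ‖bxh n i - xdag‖ ≤ ρ/2) := by
    intro n hn i
    rw [hxh_comp n i]
    exact (hcompmono (bxs n i) (hballmem _ (hn i)) i).trans (hn i)
  have hball : ∀ n, ∀ i, ‖bxs n i - xdag‖ ≤ ρ/2 := by
    intro n
    induction n with
    | zero =>
      intro i
      rw [hbxs0 i, norm_sub_rev]
      exact hr₀
    | succ n ih =>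
      intro i
      have hh := hballh_of n ih
      have h1 : bxs (n+1) i = (bxh n - G (bxh n)) i := by rw [hstep2 n]
      rw [h1]
      exact hGbound (bxh n) xdag (ρ/2) hh i
  have hballh : ∀ n, ∀ i, ‖bxh n i - xdag‖ ≤ ρ/2 := fun n => hballh_of n (hball n)
  have hmem_s : ∀ n (i : Fin N), bxs n i ∈ closedBall x₀ ρ :=
    fun n i => hballmem _ (hball n i)
  have hmem_h : ∀ n (i : Fin N), bxh n i ∈ closedBall x₀ ρ :=
    fun n i => hballmem _ (hballh n i)
  -- operator norm of bF'
  have hbF'op : ∀ n, ‖bF' (bxs n)‖ ≤ 1 := by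
    intro n
    refine ContinuousLinearMap.opNorm_le_bound _ zero_le_one (fun h => ?_)
    rw [one_mul]
    refine eLK.le_of_sq_le_sq (norm_nonneg _) ?_ (norm_nonneg _)
    rw [PiLp.norm_sq_eq_of_L2, PiLp.norm_sq_eq_of_L2]
    refine Finset.sum_le_sum fun i _ => ?_
    rw [hbF']
    have h1 : ‖F' i (bxs n i) (h i)‖ ≤ ‖h i‖ := by
      calc ‖F' i (bxs n i) (h i)‖ ≤ ‖F' i (bxs n i)‖ * ‖h i‖ :=
            ContinuousLinearMap.le_opNorm _ _
      _ ≤ 1 * ‖h i‖ := mul_le_mul_of_nonneg_right (hscal i _ (hmem_s n i)) (norm_nonneg _)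
      _ = ‖h i‖ := one_mul _
    exact pow_le_pow_left₀ (norm_nonneg _) h1 2
  -- product tangential cone condition
  have hbtcc : ∀ u v : PiLp 2 (fun _ : Fin N => X),
      (∀ i, u i ∈ closedBall x₀ ρ) → (∀ i, v i ∈ closedBall x₀ ρ) →
      ‖bF u - bF v - bF' u (u - v)‖ ≤ η' * ‖bF u - bF v‖ := by
    intro u v hu hv
    refine eLK.le_of_sq_le_sq (by positivity) ?_ (norm_nonneg _)
    rw [mul_pow, PiLp.norm_sq_eq_of_L2, PiLp.norm_sq_eq_of_L2, Finset.mul_sum]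
    refine Finset.sum_le_sum fun i _ => ?_
    have hcomp : (bF u - bF v - bF' u (u - v)) i
        = F i (u i) - F i (v i) - F' i (u i) (u i - v i) := by
      have h1 : (bF u - bF v - bF' u (u - v)) i = bF u i - bF v i - bF' u (u - v) i := rfl
      rw [h1, hbF, hbF, hbF']
      rfl
    have hcomp2 : (bF u - bF v) i = F i (u i) - F i (v i) := by
      have h1 : (bF u - bF v) i = bF u i - bF v i := rfl
      rw [h1, hbF, hbF]
    rw [hcomp, hcomp2]
    calc ‖F i (u i) - F i (v i) - F' i (u i) (u i - v i)‖^2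
        ≤ (η' * ‖F i (u i) - F i (v i)‖)^2 :=
          pow_le_pow_left₀ (norm_nonneg _) (htcc' i (u i) (hu i) (v i) (hv i)) 2
    _ = η'^2 * ‖F i (u i) - F i (v i)‖^2 := by rw [mul_pow]
  -- the constant solution vector
  set xd : PiLp 2 (fun _ : Fin N => X) := WithLp.toLp 2 (fun _ => xdag) with hxddef
  have hxdi : ∀ i : Fin N, xd i = xdag := fun _ => rfl
  have hxdball' : ∀ i : Fin N, xd i ∈ closedBall x₀ ρ := fun _ => hxdball
  have hbFxd : bF xd = ybar := by
    ext i
    rw [hbF, hybar]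
    exact hdagsol i
  have hDxd : D xd = 0 := hDconst xdag
  -- vector tangential cone at the solution
  have hAe : ∀ n, ‖bF' (bxs n) (bxs n - xd) - (bF (bxs n) - ybar)‖
      ≤ η' * ‖bF (bxs n) - ybar‖ := by
    intro n
    have h := hbtcc (bxs n) xd (hmem_s n) hxdball'
    rw [hbFxd] at h
    calc ‖bF' (bxs n) (bxs n - xd) - (bF (bxs n) - ybar)‖
        = ‖bF (bxs n) - ybar - bF' (bxs n) (bxs n - xd)‖ := norm_sub_rev _ _
    _ ≤ η' * ‖bF (bxs n) - ybar‖ := h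
  -- the two decrease estimates
  have hdec1 : ∀ n, ‖bxh n - xd‖^2
      ≤ ‖bxs n - xd‖^2 - (1-2*η') * ‖bF (bxs n) - ybar‖^2 := by
    intro n
    have h := eLK.landweber_decrease (bF' (bxs n)) (hbF'op n) (bxs n - xd)
      (bF (bxs n) - ybar) η' (hAe n)
    have he : bxs n - xd - (ContinuousLinearMap.adjoint (bF' (bxs n))) (bF (bxs n) - ybar)
        = bxh n - xd := by
      rw [hstep1 n]; abel
    rwa [he] at h
  have hdec2 : ∀ n, ‖bxs (n+1) - xd‖^2 ≤ ‖bxh n - xd‖^2 - lam^2 * ‖D (bxh n)‖^2 := by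
    intro n
    have hDe : D (bxh n) = D (bxh n - xd) := by rw [map_sub, hDxd, sub_zero]
    have he : bxs (n+1) - xd = (bxh n - xd)
        - lam^2 • (ContinuousLinearMap.adjoint D) (D (bxh n - xd)) := by
      rw [hstep2 n, hGapp, ← hDe]; abel
    rw [he, hDe]
    have h1 : ‖(bxh n - xd) - lam^2 • (ContinuousLinearMap.adjoint D) (D (bxh n - xd))‖^2
        = ‖bxh n - xd‖^2 - 2*(lam^2 * ‖D (bxh n - xd)‖^2)
          + ‖lam^2 • (ContinuousLinearMap.adjoint D) (D (bxh n - xd))‖^2 := by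
      rw [norm_sub_sq_real]
      have h2 : ⟪bxh n - xd, lam^2 • (ContinuousLinearMap.adjoint D) (D (bxh n - xd))⟫
          = lam^2 * ‖D (bxh n - xd)‖^2 := by
        rw [real_inner_smul_right, ContinuousLinearMap.adjoint_inner_right,
          real_inner_self_eq_norm_sq]
      rw [h2]
    have h3 : ‖lam^2 • (ContinuousLinearMap.adjoint D) (D (bxh n - xd))‖
        ≤ lam * ‖D (bxh n - xd)‖ := by
      rw [norm_smul, Real.norm_eq_abs, abs_of_nonneg (sq_nonneg lam)]
      have h4 := hadjDlam (D (bxh n - xd))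
      nlinarith [norm_nonneg (ContinuousLinearMap.adjoint D (D (bxh n - xd))), hlam.le]
    nlinarith [h1, h3,
      norm_nonneg (lam^2 • (ContinuousLinearMap.adjoint D) (D (bxh n - xd))),
      norm_nonneg (D (bxh n - xd)), mul_nonneg hlam.le (norm_nonneg (D (bxh n - xd)))]
  -- summability quantities
  set tt : ℕ → ℝ := fun n => ‖bF (bxs n) - ybar‖^2 + lam^2 * ‖D (bxh n)‖^2 with httdef
  set dsq : ℕ → ℝ := fun n => ‖bxs n - xd‖^2 with hdsqdef
  have htt0 : ∀ n, 0 ≤ tt n := fun n => by simp only [httdef]; positivity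
  have hdsq0 : ∀ n, 0 ≤ dsq n := fun n => by simp only [hdsqdef]; positivity
  have hstepineq : ∀ n, dsq (n+1) + (1-2*η') * tt n ≤ dsq n := by
    intro n
    have h1 := hdec1 n
    have h2 := hdec2 n
    simp only [hdsqdef, httdef]
    nlinarith [mul_nonneg hη'0 (mul_nonneg (sq_nonneg lam) (sq_nonneg ‖D (bxh n)‖)),
      mul_nonneg (sq_nonneg lam) (sq_nonneg ‖D (bxh n)‖)]
  have hcpos : 0 < 1 - 2*η' := by linarith
  have hanti1 : ∀ n, dsq (n+1) ≤ dsq n := fun n => by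
    nlinarith [hstepineq n, htt0 n, mul_nonneg hcpos.le (htt0 n)]
  have hdsq_anti : Antitone dsq := antitone_nat_of_succ_le hanti1
  set SS : ℕ → ℝ := fun n => ∑ j ∈ Finset.range n, tt j with hSSdef
  have hSSsucc : ∀ n, SS (n+1) = SS n + tt n := by
    intro n; simp only [hSSdef]; rw [Finset.sum_range_succ]
  have hSSmono : Monotone SS := monotone_nat_of_le_succ (fun n => by
    rw [hSSsucc]; linarith [htt0 n])
  have hSSbound : ∀ n, (1-2*η') * SS n + dsq n ≤ dsq 0 := by
    intro n
    induction n with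
    | zero => simp [hSSdef]
    | succ n ih =>
      have h := hstepineq n
      rw [hSSsucc]
      nlinarith
  have hSSbdd : BddAbove (Set.range SS) := by
    refine ⟨dsq 0 / (1-2*η'), ?_⟩
    rintro _ ⟨n, rfl⟩
    rw [le_div_iff₀ hcpos]
    nlinarith [hSSbound n, hdsq0 n]
  set Sinf : ℝ := ⨆ n, SS n with hSinfdef
  have hS_tend : Tendsto SS atTop (nhds Sinf) := tendsto_atTop_ciSup hSSmono hSSbdd
  have hSleSinf : ∀ n, SS n ≤ Sinf := fun n => le_ciSup hSSbdd n
  have hdsqbdd : BddBelow (Set.range dsq) := ⟨0, by rintro _ ⟨n, rfl⟩; exact hdsq0 n⟩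
  set LL : ℝ := ⨅ n, dsq n with hLLdef
  have hdsq_tend : Tendsto dsq atTop (nhds LL) := tendsto_atTop_ciInf hdsq_anti hdsqbdd
  have hLLle : ∀ n, LL ≤ dsq n := fun n => ciInf_le hdsqbdd n
  clear_value tt dsq SS Sinf LL
  -- anchor functional
  set mu : ℕ → ℝ := fun n => ‖bF (bxs n) - ybar‖^2 + lam^2 * ‖D (bxs n)‖^2 with hmudef
  have hmu0 : ∀ n, 0 ≤ mu n := fun n => by simp only [hmudef]; positivity
  clear_value mu
  have hsn : ∀ n, ‖(ContinuousLinearMap.adjoint (bF' (bxs n))) (bF (bxs n) - ybar)‖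
      ≤ ‖bF (bxs n) - ybar‖ := by
    intro n
    calc ‖(ContinuousLinearMap.adjoint (bF' (bxs n))) (bF (bxs n) - ybar)‖
        ≤ ‖ContinuousLinearMap.adjoint (bF' (bxs n))‖ * ‖bF (bxs n) - ybar‖ :=
          ContinuousLinearMap.le_opNorm _ _
    _ ≤ 1 * ‖bF (bxs n) - ybar‖ := by
        rw [ContinuousLinearMap.adjoint.norm_map]
        exact mul_le_mul_of_nonneg_right (hbF'op n) (norm_nonneg _)
    _ = ‖bF (bxs n) - ybar‖ := one_mul _
  have hmule : ∀ n, mu n ≤ 3 * tt n := by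
    intro n
    have hx : D (bxs n) = D (bxh n)
        + D ((ContinuousLinearMap.adjoint (bF' (bxs n))) (bF (bxs n) - ybar)) := by
      rw [← map_add]
      congr 1
      rw [hstep1 n]; abel
    have h1 : lam * ‖D (bxs n)‖ ≤ lam * ‖D (bxh n)‖ + ‖bF (bxs n) - ybar‖ := by
      calc lam * ‖D (bxs n)‖
          ≤ lam * (‖D (bxh n)‖
            + ‖D ((ContinuousLinearMap.adjoint (bF' (bxs n))) (bF (bxs n) - ybar))‖) := by
            rw [hx]
            exact mul_le_mul_of_nonneg_left (norm_add_le _ _) hlam.le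
      _ = lam * ‖D (bxh n)‖
            + lam * ‖D ((ContinuousLinearMap.adjoint (bF' (bxs n))) (bF (bxs n) - ybar))‖ := by
            ring
      _ ≤ lam * ‖D (bxh n)‖
            + ‖(ContinuousLinearMap.adjoint (bF' (bxs n))) (bF (bxs n) - ybar)‖ := by
            linarith [hDnorm ((ContinuousLinearMap.adjoint (bF' (bxs n))) (bF (bxs n) - ybar))]
      _ ≤ lam * ‖D (bxh n)‖ + ‖bF (bxs n) - ybar‖ := by linarith [hsn n]
    simp only [hmudef, httdef]
    nlinarith [norm_nonneg (D (bxh n)), norm_nonneg (bF (bxs n) - ybar),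
      norm_nonneg (D (bxs n)), mul_nonneg hlam.le (norm_nonneg (D (bxs n))),
      mul_nonneg hlam.le (norm_nonneg (D (bxh n))),
      sq_nonneg (lam*‖D (bxh n)‖ - ‖bF (bxs n) - ybar‖)]
  -- the cross-term estimate
  set CC : ℝ := (1+η')*(2+Real.sqrt 3) + Real.sqrt 3 with hCCdef
  have hCC0 : 0 ≤ CC := by
    have h3 := Real.sqrt_nonneg 3
    simp only [hCCdef]
    nlinarith
  clear_value CC
  have hcross : ∀ n k, mu k ≤ mu n →
      |⟪bxs n - bxs (n+1), bxs k - xd⟫| ≤ CC * tt n := by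
    intro n k hmin
    set a : ℝ := Real.sqrt (tt n) with hadef
    have ha0 : 0 ≤ a := Real.sqrt_nonneg _
    have ha2 : a^2 = tt n := Real.sq_sqrt (htt0 n)
    have hra : ‖bF (bxs n) - ybar‖ ≤ a := by
      refine (Real.le_sqrt (norm_nonneg _) (htt0 n)).mpr ?_
      simp only [httdef]
      exact le_add_of_nonneg_right (by positivity)
    have hda : lam * ‖D (bxh n)‖ ≤ a := by
      refine (Real.le_sqrt (mul_nonneg hlam.le (norm_nonneg _)) (htt0 n)).mpr ?_
      simp only [httdef]
      rw [mul_pow]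
      exact le_add_of_nonneg_left (by positivity)
    have hmusq : Real.sqrt (mu k) ≤ Real.sqrt 3 * a := by
      have h1 : Real.sqrt (mu k) ≤ Real.sqrt (3 * tt n) :=
        Real.sqrt_le_sqrt (hmin.trans (hmule n))
      rwa [Real.sqrt_mul (by norm_num : (0:ℝ) ≤ 3), ← hadef] at h1
    have hrk : ‖bF (bxs k) - ybar‖ ≤ Real.sqrt 3 * a := by
      refine le_trans ?_ hmusq
      refine (Real.le_sqrt (norm_nonneg _) (hmu0 k)).mpr ?_
      simp only [hmudef]
      exact le_add_of_nonneg_right (by positivity)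
    have hdk : lam * ‖D (bxs k)‖ ≤ Real.sqrt 3 * a := by
      refine le_trans ?_ hmusq
      refine (Real.le_sqrt (mul_nonneg hlam.le (norm_nonneg _)) (hmu0 k)).mpr ?_
      simp only [hmudef]
      rw [mul_pow]
      exact le_add_of_nonneg_left (by positivity)
    have hdecomp : bxs n - bxs (n+1)
        = (ContinuousLinearMap.adjoint (bF' (bxs n))) (bF (bxs n) - ybar) + G (bxh n) := by
      rw [hstep2 n, hstep1 n]; abel
    -- bound on the Landweber part
    have hA1 : ‖bF' (bxs n) (bxs n - xd)‖ ≤ (1+η') * ‖bF (bxs n) - ybar‖ := by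
      calc ‖bF' (bxs n) (bxs n - xd)‖
          = ‖(bF' (bxs n) (bxs n - xd) - (bF (bxs n) - ybar)) + (bF (bxs n) - ybar)‖ := by
            rw [sub_add_cancel]
      _ ≤ ‖bF' (bxs n) (bxs n - xd) - (bF (bxs n) - ybar)‖ + ‖bF (bxs n) - ybar‖ :=
            norm_add_le _ _
      _ ≤ η' * ‖bF (bxs n) - ybar‖ + ‖bF (bxs n) - ybar‖ := add_le_add_left (hAe n) _
      _ = (1+η') * ‖bF (bxs n) - ybar‖ := by ring
    have hA2 : ‖bF' (bxs n) (bxs n - bxs k)‖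
        ≤ (1+η') * (‖bF (bxs n) - ybar‖ + ‖bF (bxs k) - ybar‖) := by
      have h := hbtcc (bxs n) (bxs k) (hmem_s n) (hmem_s k)
      have h2 : ‖bF' (bxs n) (bxs n - bxs k)‖ ≤ (1+η') * ‖bF (bxs n) - bF (bxs k)‖ := by
        calc ‖bF' (bxs n) (bxs n - bxs k)‖
            = ‖(bF' (bxs n) (bxs n - bxs k) - (bF (bxs n) - bF (bxs k)))
              + (bF (bxs n) - bF (bxs k))‖ := by rw [sub_add_cancel]
        _ ≤ ‖bF' (bxs n) (bxs n - bxs k) - (bF (bxs n) - bF (bxs k))‖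
              + ‖bF (bxs n) - bF (bxs k)‖ := norm_add_le _ _
        _ ≤ η' * ‖bF (bxs n) - bF (bxs k)‖ + ‖bF (bxs n) - bF (bxs k)‖ :=
              add_le_add_left ((le_of_eq (norm_sub_rev _ _)).trans h) _
        _ = (1+η') * ‖bF (bxs n) - bF (bxs k)‖ := by ring
      have h3 : ‖bF (bxs n) - bF (bxs k)‖ ≤ ‖bF (bxs n) - ybar‖ + ‖bF (bxs k) - ybar‖ := by
        calc ‖bF (bxs n) - bF (bxs k)‖
            = ‖(bF (bxs n) - ybar) - (bF (bxs k) - ybar)‖ := by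
              rw [sub_sub_sub_cancel_right]
        _ ≤ ‖bF (bxs n) - ybar‖ + ‖bF (bxs k) - ybar‖ := norm_sub_le _ _
      exact h2.trans (mul_le_mul_of_nonneg_left h3 (by linarith))
    have hb1 : |⟪(ContinuousLinearMap.adjoint (bF' (bxs n))) (bF (bxs n) - ybar),
        bxs k - xd⟫| ≤ ‖bF (bxs n) - ybar‖
          * ((1+η') * ‖bF (bxs n) - ybar‖
            + (1+η') * (‖bF (bxs n) - ybar‖ + ‖bF (bxs k) - ybar‖)) := by
      rw [ContinuousLinearMap.adjoint_inner_left]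
      refine (abs_real_inner_le_norm _ _).trans ?_
      refine mul_le_mul_of_nonneg_left ?_ (norm_nonneg _)
      have hsplit : bxs k - xd = (bxs n - xd) - (bxs n - bxs k) := by abel
      calc ‖bF' (bxs n) (bxs k - xd)‖
          = ‖bF' (bxs n) (bxs n - xd) - bF' (bxs n) (bxs n - bxs k)‖ := by
            rw [hsplit, map_sub]
      _ ≤ ‖bF' (bxs n) (bxs n - xd)‖ + ‖bF' (bxs n) (bxs n - bxs k)‖ := norm_sub_le _ _
      _ ≤ (1+η') * ‖bF (bxs n) - ybar‖
            + (1+η') * (‖bF (bxs n) - ybar‖ + ‖bF (bxs k) - ybar‖) := add_le_add hA1 hA2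
    have hb2 : |⟪G (bxh n), bxs k - xd⟫|
        ≤ (lam * ‖D (bxh n)‖) * (lam * ‖D (bxs k)‖) := by
      have hGi : ⟪G (bxh n), bxs k - xd⟫ = lam^2 * ⟪D (bxh n), D (bxs k)⟫ := by
        rw [hGapp, real_inner_smul_left, ContinuousLinearMap.adjoint_inner_left,
          map_sub, hDxd, sub_zero]
      rw [hGi, abs_mul, abs_of_nonneg (sq_nonneg lam)]
      calc lam^2 * |⟪D (bxh n), D (bxs k)⟫|
          ≤ lam^2 * (‖D (bxh n)‖ * ‖D (bxs k)‖) :=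
            mul_le_mul_of_nonneg_left (abs_real_inner_le_norm _ _) (sq_nonneg _)
      _ = (lam * ‖D (bxh n)‖) * (lam * ‖D (bxs k)‖) := by ring
    -- combine
    have e1 : |⟪(ContinuousLinearMap.adjoint (bF' (bxs n))) (bF (bxs n) - ybar),
        bxs k - xd⟫| ≤ a * ((1+η') * a + (1+η') * (a + Real.sqrt 3 * a)) := by
      refine hb1.trans ?_
      have h1p : (0:ℝ) ≤ 1 + η' := by linarith
      gcongr
    have e2 : |⟪G (bxh n), bxs k - xd⟫| ≤ a * (Real.sqrt 3 * a) :=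
      hb2.trans (mul_le_mul hda hdk (by positivity) ha0)
    have hsum : ⟪bxs n - bxs (n+1), bxs k - xd⟫
        = ⟪(ContinuousLinearMap.adjoint (bF' (bxs n))) (bF (bxs n) - ybar), bxs k - xd⟫
          + ⟪G (bxh n), bxs k - xd⟫ := by
      rw [hdecomp, inner_add_left]
    rw [hsum]
    calc |⟪(ContinuousLinearMap.adjoint (bF' (bxs n))) (bF (bxs n) - ybar), bxs k - xd⟫
        + ⟪G (bxh n), bxs k - xd⟫|
        ≤ |⟪(ContinuousLinearMap.adjoint (bF' (bxs n))) (bF (bxs n) - ybar), bxs k - xd⟫|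
          + |⟪G (bxh n), bxs k - xd⟫| := abs_add_le _ _
    _ ≤ a * ((1+η') * a + (1+η') * (a + Real.sqrt 3 * a)) + a * (Real.sqrt 3 * a) :=
          add_le_add e1 e2
    _ = ((1+η')*(2+Real.sqrt 3) + Real.sqrt 3) * a^2 := by ring
    _ = CC * tt n := by rw [ha2, hCCdef]
  -- telescoping
  have htel : ∀ m k, m ≤ k → bxs k - bxs m
      = ∑ n ∈ Finset.Ico m k, (bxs (n+1) - bxs n) := by
    intro m k hmk
    induction k, hmk using Nat.le_induction with
    | base => simp
    | succ k hmk ih => rw [Finset.sum_Ico_succ_top hmk, ← ih]; abel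
  have hSSIco : ∀ m k, m ≤ k → ∑ n ∈ Finset.Ico m k, tt n = SS k - SS m := by
    intro m k hmk
    rw [Finset.sum_Ico_eq_sub tt hmk, hSSdef]
  have hinner1 : ∀ m k, m ≤ k → (∀ n, m ≤ n → n < k → mu k ≤ mu n) →
      ⟪bxs k - bxs m, bxs k - xd⟫ ≤ CC * (SS k - SS m) := by
    intro m k hmk hminin
    rw [htel m k hmk, sum_inner, ← hSSIco m k hmk, Finset.mul_sum]
    refine Finset.sum_le_sum fun n hn => ?_
    rw [Finset.mem_Ico] at hn
    have h := hcross n k (hminin n hn.1 hn.2)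
    have h2 : ⟪bxs (n+1) - bxs n, bxs k - xd⟫ = -⟪bxs n - bxs (n+1), bxs k - xd⟫ := by
      rw [← inner_neg_left, neg_sub]
    rw [h2]
    calc -⟪bxs n - bxs (n+1), bxs k - xd⟫ ≤ |⟪bxs n - bxs (n+1), bxs k - xd⟫| :=
          neg_le_abs _
    _ ≤ CC * tt n := h
  have hinner2 : ∀ k l, k ≤ l → (∀ n, k ≤ n → n < l → mu k ≤ mu n) →
      ⟪bxs k - bxs l, bxs k - xd⟫ ≤ CC * (SS l - SS k) := by
    intro k l hkl hminin
    have h1 : bxs k - bxs l = ∑ n ∈ Finset.Ico k l, (bxs n - bxs (n+1)) := by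
      have h2 := htel k l hkl
      have h3 : bxs k - bxs l = -(bxs l - bxs k) := by abel
      rw [h3, h2, ← Finset.sum_neg_distrib]
      exact Finset.sum_congr rfl fun n _ => by abel
    rw [h1, sum_inner, ← hSSIco k l hkl, Finset.mul_sum]
    refine Finset.sum_le_sum fun n hn => ?_
    rw [Finset.mem_Ico] at hn
    have h := hcross n k (hminin n hn.1 hn.2)
    exact (le_abs_self _).trans h
  have hdist1 : ∀ m k, m ≤ k → (∀ n, m ≤ n → n < k → mu k ≤ mu n) →
      ‖bxs k - bxs m‖^2 ≤ (dsq m - dsq k) + 2*CC*(SS k - SS m) := by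
    intro m k hmk hminin
    have hsplit : bxs k - bxs m = (bxs k - xd) - (bxs m - xd) := by abel
    have hB : ‖(bxs k - xd) - (bxs m - xd)‖^2
        = ‖bxs k - xd‖^2 - 2*⟪bxs k - xd, bxs m - xd⟫ + ‖bxs m - xd‖^2 :=
      norm_sub_sq_real _ _
    have hC2 : ⟪bxs k - bxs m, bxs k - xd⟫
        = ‖bxs k - xd‖^2 - ⟪bxs m - xd, bxs k - xd⟫ := by
      rw [hsplit, inner_sub_left, real_inner_self_eq_norm_sq]
    have hIB := hinner1 m k hmk hminin
    have hcomm : ⟪bxs m - xd, bxs k - xd⟫ = ⟪bxs k - xd, bxs m - xd⟫ :=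
      real_inner_comm _ _
    have hdm : dsq m = ‖bxs m - xd‖^2 := by rw [hdsqdef]
    have hdk : dsq k = ‖bxs k - xd‖^2 := by rw [hdsqdef]
    rw [hsplit, hB, hdm, hdk]
    linarith [hC2, hIB, hcomm]
  have hdist2 : ∀ k l, k ≤ l → (∀ n, k ≤ n → n < l → mu k ≤ mu n) →
      ‖bxs l - bxs k‖^2 ≤ (dsq l - dsq k) + 2*CC*(SS l - SS k) := by
    intro k l hkl hminin
    have hsplit : bxs l - bxs k = (bxs l - xd) - (bxs k - xd) := by abel
    have hB : ‖(bxs l - xd) - (bxs k - xd)‖^2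
        = ‖bxs l - xd‖^2 - 2*⟪bxs l - xd, bxs k - xd⟫ + ‖bxs k - xd‖^2 :=
      norm_sub_sq_real _ _
    have hC2 : ⟪bxs k - bxs l, bxs k - xd⟫
        = ‖bxs k - xd‖^2 - ⟪bxs l - xd, bxs k - xd⟫ := by
      rw [show bxs k - bxs l = (bxs k - xd) - (bxs l - xd) by abel,
        inner_sub_left, real_inner_self_eq_norm_sq]
    have hIB := hinner2 k l hkl hminin
    have hdl : dsq l = ‖bxs l - xd‖^2 := by rw [hdsqdef]
    have hdk : dsq k = ‖bxs k - xd‖^2 := by rw [hdsqdef]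
    rw [hsplit, hB, hdl, hdk]
    linarith [hC2, hIB]
  -- Cauchy sequence
  set bb : ℕ → ℝ := fun M => 2 * Real.sqrt ((dsq M - LL) + 2*CC*(Sinf - SS M)) with hbbdef
  have hargnn : ∀ M, 0 ≤ (dsq M - LL) + 2*CC*(Sinf - SS M) := by
    intro M
    have h1 := hLLle M
    have h2 := hSleSinf M
    nlinarith [hCC0]
  have hmain : ∀ M m l, M ≤ m → m ≤ l → ‖bxs l - bxs m‖ ≤ bb M := by
    intro M m l hMm hml
    obtain ⟨k, hkmem, hkmin⟩ := Finset.exists_min_image (Finset.Icc m l) mu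
      ⟨m, Finset.mem_Icc.mpr ⟨le_rfl, hml⟩⟩
    rw [Finset.mem_Icc] at hkmem
    obtain ⟨hmk, hkl⟩ := hkmem
    have hd1 := hdist1 m k hmk (fun n h1 h2 => hkmin n
      (Finset.mem_Icc.mpr ⟨h1, h2.le.trans hkl⟩))
    have hd2 := hdist2 k l hkl (fun n h1 h2 => hkmin n
      (Finset.mem_Icc.mpr ⟨hmk.trans h1, h2.le⟩))
    have hQ1 : ‖bxs k - bxs m‖^2 ≤ (dsq M - LL) + 2*CC*(Sinf - SS M) := by
      have e1 : dsq m ≤ dsq M := hdsq_anti hMm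
      have e2 : LL ≤ dsq k := hLLle k
      have e3 : SS k ≤ Sinf := hSleSinf k
      have e4 : SS M ≤ SS m := hSSmono hMm
      nlinarith [hCC0]
    have hQ2 : ‖bxs l - bxs k‖^2 ≤ (dsq M - LL) + 2*CC*(Sinf - SS M) := by
      have e1 : dsq l ≤ dsq k := hdsq_anti hkl
      have e2 : LL ≤ dsq M := hLLle M
      have e3 : SS l ≤ Sinf := hSleSinf l
      have e4 : SS M ≤ SS k := hSSmono (hMm.trans hmk)
      have e5 : dsq k ≤ dsq M := hdsq_anti (hMm.trans hmk)
      nlinarith [hCC0]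
    have hs1 : ‖bxs k - bxs m‖ ≤ Real.sqrt ((dsq M - LL) + 2*CC*(Sinf - SS M)) :=
      (Real.le_sqrt (norm_nonneg _) (hargnn M)).mpr hQ1
    have hs2 : ‖bxs l - bxs k‖ ≤ Real.sqrt ((dsq M - LL) + 2*CC*(Sinf - SS M)) :=
      (Real.le_sqrt (norm_nonneg _) (hargnn M)).mpr hQ2
    calc ‖bxs l - bxs m‖ = ‖(bxs l - bxs k) + (bxs k - bxs m)‖ := by
          rw [sub_add_sub_cancel]
    _ ≤ ‖bxs l - bxs k‖ + ‖bxs k - bxs m‖ := norm_add_le _ _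
    _ ≤ Real.sqrt ((dsq M - LL) + 2*CC*(Sinf - SS M))
          + Real.sqrt ((dsq M - LL) + 2*CC*(Sinf - SS M)) := add_le_add hs2 hs1
    _ = bb M := by rw [hbbdef]; ring
  have hbbtend : Tendsto bb atTop (nhds 0) := by
    have h1 : Tendsto (fun M => (dsq M - LL) + 2*CC*(Sinf - SS M)) atTop (nhds 0) := by
      have h2 : Tendsto (fun M => dsq M - LL) atTop (nhds 0) := by
        have := hdsq_tend.sub (tendsto_const_nhds (x := LL))
        simpa using this
      have h3 : Tendsto (fun M => 2*CC*(Sinf - SS M)) atTop (nhds 0) := by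
        have h4 : Tendsto (fun M => Sinf - SS M) atTop (nhds 0) := by
          have := (tendsto_const_nhds (x := Sinf)).sub hS_tend
          simpa using this
        have := h4.const_mul (2*CC)
        simpa using this
      have := h2.add h3
      simpa using this
    have h5 := h1.sqrt
    have h6 := h5.const_mul 2
    rw [Real.sqrt_zero, mul_zero] at h6
    rw [hbbdef]
    exact h6
  have hcauchy : CauchySeq bxs := by
    refine cauchySeq_of_le_tendsto_0 bb (fun n m M hn hm => ?_) hbbtend
    rcases le_total m n with h | h
    · rw [dist_eq_norm]; exact hmain M m n hm h
    · rw [dist_comm, dist_eq_norm]; exact hmain M n m hn h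
  obtain ⟨xb, hxb⟩ := cauchySeq_tendsto_of_complete hcauchy
  -- residuals tend to zero
  have htt_tend : Tendsto tt atTop (nhds 0) := by
    have h1 : Tendsto (fun n => SS (n+1) - SS n) atTop (nhds 0) := by
      have h2 : Tendsto (fun n => SS (n+1)) atTop (nhds Sinf) :=
        hS_tend.comp (tendsto_add_atTop_nat 1)
      have := h2.sub hS_tend
      simpa using this
    have h3 : (fun n => SS (n+1) - SS n) = tt := by
      funext n
      rw [hSSsucc n]
      ring
    rwa [h3] at h1
  have hsqrt_tt : Tendsto (fun n => Real.sqrt (tt n)) atTop (nhds 0) := by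
    have := htt_tend.sqrt
    rwa [Real.sqrt_zero] at this
  have hrlett : ∀ n, ‖bF (bxs n) - ybar‖ ≤ Real.sqrt (tt n) := by
    intro n
    refine (Real.le_sqrt (norm_nonneg _) (htt0 n)).mpr ?_
    rw [httdef]
    exact le_add_of_nonneg_right (by positivity)
  have hrn_tend : Tendsto (fun n => ‖bF (bxs n) - ybar‖) atTop (nhds 0) :=
    squeeze_zero (fun n => norm_nonneg _) hrlett hsqrt_tt
  have hDxh_tend : Tendsto (fun n => ‖D (bxh n)‖) atTop (nhds 0) := by
    have hb : ∀ n, ‖D (bxh n)‖ ≤ Real.sqrt (tt n) / lam := by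
      intro n
      rw [le_div_iff₀ hlam]
      refine (Real.le_sqrt (by positivity) (htt0 n)).mpr ?_
      rw [httdef]
      have : (‖D (bxh n)‖ * lam)^2 = lam^2 * ‖D (bxh n)‖^2 := by ring
      rw [this]
      exact le_add_of_nonneg_left (by positivity)
    have hg : Tendsto (fun n => Real.sqrt (tt n) / lam) atTop (nhds 0) := by
      have := hsqrt_tt.div_const lam
      simpa using this
    exact squeeze_zero (fun n => norm_nonneg _) hb hg
  -- the half iterates converge to the same limit
  have hxh_tend : Tendsto bxh atTop (nhds xb) := by
    have h1 : Tendsto (fun n => bxh n - bxs n) atTop (nhds 0) := by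
      rw [tendsto_zero_iff_norm_tendsto_zero]
      refine squeeze_zero (fun n => norm_nonneg _) (fun n => ?_) hrn_tend
      have h2 : bxh n - bxs n
          = -((ContinuousLinearMap.adjoint (bF' (bxs n))) (bF (bxs n) - ybar)) := by
        rw [hstep1 n]; abel
      rw [h2, norm_neg]
      exact hsn n
    have h5 := h1.add hxb
    rw [zero_add] at h5
    have h6 : (fun n => (bxh n - bxs n) + bxs n) = bxh := funext fun n => by abel
    rwa [h6] at h5
  have hDxb : D xb = 0 := by
    have h1 : Tendsto (fun n => D (bxh n)) atTop (nhds (D xb)) :=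
      (D.continuous.tendsto xb).comp hxh_tend
    have h2 : Tendsto (fun n => ‖D (bxh n)‖) atTop (nhds ‖D xb‖) := h1.norm
    have h3 := tendsto_nhds_unique h2 hDxh_tend
    rwa [norm_eq_zero] at h3
  -- the limit is a constant vector
  have hconst : ∀ i : Fin N, xb i = xb 0 := by
    have hsucc : ∀ i : Fin N, xb (i + 1) = xb i := by
      intro i
      have h1 : D xb i = 0 := by rw [hDxb]; rfl
      rw [hD] at h1
      exact sub_eq_zero.mp h1
    intro i
    open Fin.NatCast in
    have key : ∀ k : ℕ, xb ((k : Fin N)) = xb 0 := by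
      intro k
      induction k with
      | zero => rw [Nat.cast_zero]
      | succ n ih =>
        rw [show ((n+1 : ℕ) : Fin N) = ((n : ℕ) : Fin N) + 1 by push_cast; ring, hsucc, ih]
    have hk := key i.val
    rwa [Fin.cast_val_eq_self] at hk
  -- componentwise convergence and solution property of the limit
  have hnorm_tend : Tendsto (fun n => ‖bxs n - xb‖) atTop (nhds 0) := by
    have := tendsto_iff_norm_sub_tendsto_zero.mp hxb
    exact this
  have hcomp_tend : ∀ i : Fin N, Tendsto (fun n => bxs n i) atTop (nhds (xb i)) := by
    intro i
    rw [tendsto_iff_norm_sub_tendsto_zero]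
    refine squeeze_zero (fun n => norm_nonneg _) (fun n => ?_) hnorm_tend
    exact eLK.piLp_norm_apply_le (bxs n - xb) i
  have hxb_near : ∀ i, ‖xb i - xdag‖ ≤ ρ/2 := by
    intro i
    have h1 : Tendsto (fun n => ‖bxs n i - xdag‖) atTop (nhds ‖xb i - xdag‖) :=
      ((hcomp_tend i).sub tendsto_const_nhds).norm
    exact le_of_tendsto h1 (Eventually.of_forall fun n => hball n i)
  have hxbmem : ∀ i, xb i ∈ closedBall x₀ ρ := fun i => hballmem _ (hxb_near i)
  have hFxb : ∀ i, F i (xb i) = y i := by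
    intro i
    have hcont : ContinuousAt (F i) (xb i) := (hdiff i (xb i) (hxbmem i)).continuousAt
    have h1 : Tendsto (fun n => F i (bxs n i)) atTop (nhds (F i (xb i))) :=
      hcont.tendsto.comp (hcomp_tend i)
    have h2 : Tendsto (fun n => F i (bxs n i)) atTop (nhds (y i)) := by
      rw [tendsto_iff_norm_sub_tendsto_zero]
      refine squeeze_zero (fun n => norm_nonneg _) (fun n => ?_) hrn_tend
      have h3 : F i (bxs n i) - y i = (bF (bxs n) - ybar) i := (hcomp_r n i).symm
      rw [h3]
      exact eLK.piLp_norm_apply_le _ i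
    exact tendsto_nhds_unique h1 h2
  have hsol0 : ∀ i, F i (xb 0) = y i := fun i => by rw [← hconst i]; exact hFxb i
  -- the limit component lies in the kernel directions
  have hker_w : ∀ i, F' i xdag (xb 0 - xdag) = 0 := by
    intro i
    have h := htcc i xdag hxdball (xb 0) (hxbmem 0)
    rw [hdagsol i, hsol0 i, sub_self] at h
    have h2 : ‖(F' i xdag) (xdag - xb 0)‖ ≤ 0 := by
      calc ‖(F' i xdag) (xdag - xb 0)‖ = ‖(0:Y) - (F' i xdag) (xdag - xb 0)‖ := by
            rw [zero_sub, norm_neg]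
      _ ≤ η * ‖(0:Y)‖ := h
      _ = 0 := by rw [norm_zero, mul_zero]
    have h3 : (F' i xdag) (xdag - xb 0) = 0 :=
      norm_le_zero_iff.mp h2
    have h4 : xb 0 - xdag = -(xdag - xb 0) := by abel
    rw [h4, map_neg, h3, neg_zero]
  set w : X := xb 0 - xdag with hwdef
  set wv : PiLp 2 (fun _ : Fin N => X) := WithLp.toLp 2 (fun _ => w) with hwvdef
  have hwker : ∀ i, ∀ z ∈ closedBall x₀ ρ, F' i z w = 0 := by
    intro i z hz
    have hmem : w ∈ LinearMap.ker (F' i xdag : X →ₗ[ℝ] Y) := LinearMap.mem_ker.mpr (hker_w i)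
    exact LinearMap.mem_ker.mp (hkern i z hz hmem)
  have hDwv : D wv = 0 := hDconst w
  have hbF'wv : ∀ n, bF' (bxs n) wv = 0 := by
    intro n
    ext i
    rw [hbF' (bxs n) wv i]
    exact hwker i (bxs n i) (hmem_s n i)
  set x0v : PiLp 2 (fun _ : Fin N => X) := WithLp.toLp 2 (fun _ => x₀) with hx0vdef
  have hbxs0' : bxs 0 = x0v := PiLp.ext hbxs0
  have horth : ∀ n, ⟪bxs n - x0v, wv⟫ = 0 := by
    intro n
    induction n with
    | zero => rw [hbxs0', sub_self, inner_zero_left]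
    | succ n ih =>
      have h1 : bxs (n+1) - x0v = (bxs n - x0v)
          - ((ContinuousLinearMap.adjoint (bF' (bxs n))) (bF (bxs n) - ybar)
            + G (bxh n)) := by
        rw [hstep2 n, hstep1 n]; abel
      rw [h1, inner_sub_left, inner_add_left, ih]
      have h2 : ⟪(ContinuousLinearMap.adjoint (bF' (bxs n))) (bF (bxs n) - ybar), wv⟫
          = 0 := by
        rw [ContinuousLinearMap.adjoint_inner_left, hbF'wv n, inner_zero_right]
      have h3 : ⟪G (bxh n), wv⟫ = 0 := by
        rw [hGapp, real_inner_smul_left, ContinuousLinearMap.adjoint_inner_left,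
          hDwv, inner_zero_right, mul_zero]
      rw [h2, h3]
      ring
  have hlim_orth : ⟪xb - x0v, wv⟫ = 0 := by
    have h1 : Tendsto (fun n => ⟪bxs n - x0v, wv⟫) atTop (nhds ⟪xb - x0v, wv⟫) :=
      (hxb.sub tendsto_const_nhds).inner tendsto_const_nhds
    have h2 : (fun n => ⟪bxs n - x0v, wv⟫) = fun _ => (0:ℝ) := funext horth
    rw [h2] at h1
    exact tendsto_nhds_unique h1 tendsto_const_nhds
  have hip1 : ⟪xb 0 - x₀, w⟫ = 0 := by
    have h1 : ⟪xb - x0v, wv⟫ = ∑ _i : Fin N, ⟪xb 0 - x₀, w⟫ := by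
      rw [PiLp.inner_apply]
      refine Finset.sum_congr rfl fun i _ => ?_
      have h2 : ⟪(xb - x0v) i, wv i⟫ = ⟪xb i - x₀, w⟫ := rfl
      rw [h2, hconst i]
    rw [h1, Finset.sum_const, Finset.card_univ, Fintype.card_fin, nsmul_eq_mul]
      at hlim_orth
    have hN : (N:ℝ) ≠ 0 := Nat.cast_ne_zero.mpr (NeZero.ne N)
    exact (mul_eq_zero.mp hlim_orth).resolve_left hN
  have hip2 : ⟪xdag - x₀, w⟫ = -‖w‖^2 := by
    have h1 : ⟪xb 0 - xdag, w⟫ = ‖w‖^2 := by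
      rw [← hwdef]
      exact real_inner_self_eq_norm_sq w
    have h2 : ⟪xdag - x₀, w⟫ = ⟪xb 0 - x₀, w⟫ - ⟪xb 0 - xdag, w⟫ := by
      rw [← inner_sub_left]
      congr 1
      abel
    rw [h2, hip1, h1]
    ring
  -- the path argument forces w = 0
  have hwzero : w = 0 := by
    by_contra hw0
    have hwpos : 0 < ‖w‖ := norm_pos_iff.mpr hw0
    set t₀ : ℝ := min ((ρ/2)/(‖w‖+1)) 1 with ht₀def
    have ht₀pos : 0 < t₀ := lt_min (by positivity) one_pos
    have ht₀1 : t₀ ≤ 1 := min_le_right _ _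
    have hsmallnorm : ∀ t : ℝ, t ∈ Set.Icc (0:ℝ) t₀ → ‖t • w‖ ≤ ρ/2 := by
      intro t ht
      rw [norm_smul, Real.norm_eq_abs, abs_of_nonneg ht.1]
      have h3 : t ≤ (ρ/2)/(‖w‖+1) := ht.2.trans (min_le_left _ _)
      calc t * ‖w‖ ≤ (ρ/2)/(‖w‖+1) * ‖w‖ :=
            mul_le_mul_of_nonneg_right h3 (norm_nonneg _)
      _ ≤ ρ/2 := by
          rw [div_mul_eq_mul_div, div_le_iff₀ (by positivity)]
          nlinarith [norm_nonneg w]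
    have hmempath : ∀ t : ℝ, t ∈ Set.Icc (0:ℝ) t₀ → xdag + t • w ∈ closedBall x₀ ρ := by
      intro t ht
      rw [mem_closedBall_iff_norm]
      calc ‖xdag + t • w - x₀‖ = ‖(xdag - x₀) + t • w‖ := by
            rw [show xdag + t • w - x₀ = (xdag - x₀) + t • w by abel]
      _ ≤ ‖xdag - x₀‖ + ‖t • w‖ := norm_add_le _ _
      _ ≤ ρ := by
          have := hsmallnorm t ht
          linarith
    have hsolpath : ∀ i, F i (xdag + t₀ • w) = y i := by
      intro i
      have hderiv : ∀ t ∈ Set.Icc (0:ℝ) t₀,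
          HasDerivWithinAt (fun t : ℝ => F i (xdag + t • w)) (0:Y) (Set.Icc (0:ℝ) t₀) t := by
        intro t ht
        have hmem := hmempath t ht
        have hF := hdiff i (xdag + t • w) hmem
        have hpath : HasDerivAt (fun t : ℝ => xdag + t • w) w t := by
          simpa using ((hasDerivAt_id t).smul_const w).const_add xdag
        have hcomp := hF.comp_hasDerivAt t hpath
        rw [hwker i _ hmem] at hcomp
        exact hcomp.hasDerivWithinAt
      have hbound : ∀ t ∈ Set.Icc (0:ℝ) t₀, ‖(0:Y)‖ ≤ (0:ℝ) := by
        intro t _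
        rw [norm_zero]
      have hkey := Convex.norm_image_sub_le_of_norm_hasDerivWithin_le
        hderiv hbound (convex_Icc (0:ℝ) t₀)
        (Set.left_mem_Icc.mpr ht₀pos.le) (Set.right_mem_Icc.mpr ht₀pos.le)
      rw [zero_mul] at hkey
      have h4 : F i (xdag + t₀ • w) = F i (xdag + (0:ℝ) • w) := by
        have h5 := norm_le_zero_iff.mp hkey
        exact sub_eq_zero.mp h5
      rw [h4, zero_smul, add_zero]
      exact hdagsol i
    have hquad0 : ‖xdag - x₀‖ ≤ ‖xdag + t₀ • w - x₀‖ :=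
      hdagmin (xdag + t₀ • w) (hmempath t₀ (Set.right_mem_Icc.mpr ht₀pos.le)) hsolpath
    have hexp : ‖xdag + t₀ • w - x₀‖^2
        = ‖xdag - x₀‖^2 + 2*t₀*⟪xdag - x₀, w⟫ + t₀^2*‖w‖^2 := by
      rw [show xdag + t₀ • w - x₀ = (xdag - x₀) + t₀ • w by abel, norm_add_sq_real,
        real_inner_smul_right, norm_smul, Real.norm_eq_abs, abs_of_pos ht₀pos, mul_pow]
      ring
    have hsq : ‖xdag - x₀‖^2 ≤ ‖xdag - x₀‖^2 + 2*t₀*⟪xdag - x₀, w⟫ + t₀^2*‖w‖^2 := by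
      rw [← hexp]
      exact pow_le_pow_left₀ (norm_nonneg _) hquad0 2
    rw [hip2] at hsq
    nlinarith [mul_pos ht₀pos (mul_pos hwpos hwpos), sq_nonneg t₀]
  -- conclusion
  have hxbxd : xb = xd := by
    ext i
    have h1 : xb i = xb 0 := hconst i
    have h2 : xb 0 = xdag := by
      have h3 : xb 0 - xdag = 0 := by rw [← hwdef]; exact hwzero
      exact sub_eq_zero.mp h3
    rw [h1, h2]
  rwa [hxbxd] at hxb
end
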